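/- arXiv:1906.02021 — 3 statements merged into one kernel-verified Lean document; each statement's English description precedes it below -/
import Mathlib

section
/- Let G be a finite weighted planar graph with vertices a, b, c, d appearing in that cyclic order on a single face. Then M(G∖{b})·M(G∖{a,c,d}) + M(G∖{d})·M(G∖{a,b,c}) = M(G∖{a})·M(G∖{b,c,d}) + M(G∖{a,b,d})·M(G∖{c}), where M(H) denotes the total weight of perfect matchings of H. -/
open scoped Classical

variable {V : Type*} [Fintype V] [DecidableEq V] {R : Type*} [CommRing R]

/-- `M` is a matching of the induced subgraph of `G` on the vertex set `A`:
a set of edges of `G` contained in `A` that are pairwise vertex-disjoint. -/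
def IsMatchingOn (G : SimpleGraph V) (A : Finset V) (M : Finset (Sym2 V)) : Prop :=
  (∀ e ∈ M, e ∈ G.edgeSet) ∧ (∀ e ∈ M, ∀ v ∈ e, v ∈ A) ∧
  (∀ e ∈ M, ∀ f ∈ M, e ≠ f → ∀ v : V, v ∈ e → v ∉ f)

/-- `Mf G w S A` is the total weight (weight of a matching = product of its edge weights)
of all matchings of the induced subgraph of `G` on `A` in which every vertex of `A` not
belonging to the distinguished ("free") set `S` is matched. -/
noncomputable def Mf (G : SimpleGraph V) (w : Sym2 V → R) (S A : Finset V) : R :=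
  ∑ M ∈ Finset.univ.filter
      (fun M : Finset (Sym2 V) =>
        IsMatchingOn G A M ∧ ∀ v ∈ A, v ∉ S → ∃ e ∈ M, v ∈ e),
    ∏ e ∈ M, w e

/-- Two walks are (vertex-)disjoint. -/
def WalkDisjoint {G : SimpleGraph V} {u v u' v' : V} (P : G.Walk u v) (Q : G.Walk u' v') : Prop :=
  ∀ z : V, z ∈ P.support → z ∉ Q.support

/-- `S` is `a,c`-separated (relative to `b` and `d`): there is no triple of mutually
vertex-disjoint paths `P₁ : a — c`, `P₂ : b — s`, `P₃ : d — t` with `s ≠ t` in `S`. -/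
def Separated (G : SimpleGraph V) (S : Finset V) (a b c d : V) : Prop :=
  ¬ ∃ (s t : V) (P₁ : G.Walk a c) (P₂ : G.Walk b s) (P₃ : G.Walk d t),
      s ∈ S ∧ t ∈ S ∧ s ≠ t ∧ P₁.IsPath ∧ P₂.IsPath ∧ P₃.IsPath ∧
      WalkDisjoint P₁ P₂ ∧ WalkDisjoint P₁ P₃ ∧ WalkDisjoint P₂ P₃

/-- `L` is the boundary cycle of a face of a planar embedding of `G`, on which the four
vertices `a`, `b`, `c`, `d` occur in this cyclic order.  Planarity of the embedding is
encoded through its characteristic combinatorial consequence: two pairs of vertices that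
interleave on the boundary cycle of a face can never be joined by two vertex-disjoint
paths of `G`. -/
structure FaceConfig (G : SimpleGraph V) (L : List V) (a b c d : V) : Prop where
  nodup : L.Nodup
  cyclic : ∃ L' : List V, L ~r L' ∧ ∃ i j k l : Fin L'.length,
      i < j ∧ j < k ∧ k < l ∧ L'.get i = a ∧ L'.get j = b ∧ L'.get k = c ∧ L'.get l = d
  noncrossing : ∀ L' : List V, L ~r L' → ∀ i j k l : Fin L'.length, i < j → j < k → k < l →
      ¬ ∃ (P : G.Walk (L'.get i) (L'.get k)) (Q : G.Walk (L'.get j) (L'.get l)),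
          P.IsPath ∧ Q.IsPath ∧ WalkDisjoint P Q


set_option linter.unusedSectionVars false
set_option maxHeartbeats 1000000

namespace KuoAux

def PM (G : SimpleGraph V) (A : Finset V) (M : Finset (Sym2 V)) : Prop :=
  IsMatchingOn G A M ∧ ∀ v ∈ A, ∃ e ∈ M, v ∈ e

variable (M₁ M₂ : Finset (Sym2 V)) (a : V)

def DD : Finset (Sym2 V) := (M₁ ∪ M₂) \ (M₁ ∩ M₂)
noncomputable def HH : SimpleGraph V := SimpleGraph.fromEdgeSet ↑(DD M₁ M₂)
def comp : Set V := {v | (HH M₁ M₂).Reachable a v}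
noncomputable def TT : Finset (Sym2 V) :=
  (DD M₁ M₂).filter (fun e => ∀ v ∈ e, v ∈ comp M₁ M₂ a)
noncomputable def tog : Finset (Sym2 V) :=
  (M₁ \ TT M₁ M₂ a) ∪ (TT M₁ M₂ a ∩ M₂)

/-- vertex set of the component of `a` -/
noncomputable def compF : Finset V := Finset.univ.filter (fun v => v ∈ comp M₁ M₂ a)

lemma mem_DD_iff {e : Sym2 V} : e ∈ DD M₁ M₂ ↔ (e ∈ M₁ ∪ M₂) ∧ ¬ (e ∈ M₁ ∧ e ∈ M₂) := by
  simp [DD, Finset.mem_sdiff, Finset.mem_inter]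
lemma TT_subset_DD : TT M₁ M₂ a ⊆ DD M₁ M₂ := Finset.filter_subset _ _

lemma DD_comm : DD M₁ M₂ = DD M₂ M₁ := by
  simp [DD, Finset.union_comm, Finset.inter_comm]

lemma comp_comm : comp M₁ M₂ a = comp M₂ M₁ a := by rw [comp, HH, DD_comm]; rfl

lemma TT_comm : TT M₁ M₂ a = TT M₂ M₁ a := by rw [TT, DD_comm, comp_comm]; rfl

lemma tog_union : tog M₁ M₂ a ∪ tog M₂ M₁ a = M₁ ∪ M₂ := by
  rw [tog, tog, TT_comm M₂ M₁ a]
  ext e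
  have h1 : e ∈ TT M₁ M₂ a → e ∈ M₁ ∨ e ∈ M₂ := by
    intro h
    have := (mem_DD_iff M₁ M₂).1 (TT_subset_DD M₁ M₂ a h)
    simpa using this.1
  simp only [Finset.mem_union, Finset.mem_sdiff, Finset.mem_inter]
  tauto

lemma tog_inter : tog M₁ M₂ a ∩ tog M₂ M₁ a = M₁ ∩ M₂ := by
  rw [tog, tog, TT_comm M₂ M₁ a]
  ext e
  have h2 : e ∈ TT M₁ M₂ a → ¬ (e ∈ M₁ ∧ e ∈ M₂) := by
    intro h
    exact ((mem_DD_iff M₁ M₂).1 (TT_subset_DD M₁ M₂ a h)).2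
  simp only [Finset.mem_union, Finset.mem_sdiff, Finset.mem_inter]
  tauto

lemma DD_tog : DD (tog M₁ M₂ a) (tog M₂ M₁ a) = DD M₁ M₂ := by
  rw [DD, tog_union, tog_inter, DD]

lemma TT_tog : TT (tog M₁ M₂ a) (tog M₂ M₁ a) a = TT M₁ M₂ a := by
  rw [TT, TT, comp, comp, HH, HH, DD_tog]

lemma tog_tog : tog (tog M₁ M₂ a) (tog M₂ M₁ a) a = M₁ := by
  ext e
  rw [tog, TT_tog]
  have h2 : e ∈ TT M₁ M₂ a → ¬ (e ∈ M₁ ∧ e ∈ M₂) :=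
    fun h => ((mem_DD_iff M₁ M₂).1 (TT_subset_DD M₁ M₂ a h)).2
  have h1 : e ∈ TT M₁ M₂ a → e ∈ M₁ ∨ e ∈ M₂ := by
    intro h
    have := (mem_DD_iff M₁ M₂).1 (TT_subset_DD M₁ M₂ a h)
    simpa using this.1
  simp only [tog, TT_comm M₂ M₁ a, Finset.mem_union, Finset.mem_sdiff, Finset.mem_inter]
  tauto

lemma tog_weight (w : Sym2 V → R) :
    (∏ e ∈ tog M₁ M₂ a, w e) * (∏ e ∈ tog M₂ M₁ a, w e) =
      (∏ e ∈ M₁, w e) * (∏ e ∈ M₂, w e) := by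
  rw [← Finset.prod_union_inter, ← Finset.prod_union_inter (s₁ := M₁) (s₂ := M₂),
    tog_union, tog_inter]

lemma walk_reach {H : SimpleGraph V} {u v z : V} (p : H.Walk u v) (hz : z ∈ p.support) :
    H.Reachable u z := by
  induction p with
  | nil =>
    simp only [SimpleGraph.Walk.support_nil, List.mem_singleton] at hz
    subst hz; rfl
  | cons h q ih =>
    rcases List.mem_cons.mp (by simpa using hz) with rfl | hz'
    · exact SimpleGraph.Reachable.refl _
    · exact (SimpleGraph.Adj.reachable h).trans (ih hz')

-- injection test for the distance argument, on an abstract graph H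
lemma card_comp_le (H : SimpleGraph V) (a : V) :
    (Finset.univ.filter (fun v => H.Reachable a v)).card ≤
      ((Finset.univ.filter (fun e : Sym2 V =>
        (∀ v ∈ e, H.Reachable a v) ∧ e ∈ H.edgeSet))).card + 1 := by
  classical
  set C := Finset.univ.filter (fun v => H.Reachable a v) with hC
  set T := Finset.univ.filter (fun e : Sym2 V =>
        (∀ v ∈ e, H.Reachable a v) ∧ e ∈ H.edgeSet) with hT
  have ha : a ∈ C := Finset.mem_filter.mpr ⟨Finset.mem_univ a, SimpleGraph.Reachable.refl a⟩
  rw [← Finset.card_erase_add_one ha]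
  have hex : ∀ v ∈ C.erase a, ∃ u, H.Adj v u ∧ H.dist a u < H.dist a v := by
    intro v hv
    obtain ⟨hva, hvc⟩ := Finset.mem_erase.mp hv
    have hreach : H.Reachable a v := by simpa [hC] using hvc
    obtain ⟨p, hp⟩ := hreach.exists_walk_length_eq_dist
    have hd0 : H.dist a v ≠ 0 := by
      intro h0
      rw [← hp] at h0
      exact hva (SimpleGraph.Walk.eq_of_length_eq_zero h0).symm
    obtain ⟨x, hadj, q, hq⟩ := SimpleGraph.Walk.exists_eq_cons_of_ne hva p.reverse
    refine ⟨x, hadj, ?_⟩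
    have hlen : p.length = q.length + 1 := by
      have := congrArg SimpleGraph.Walk.length hq
      simpa using this
    have hdx : H.dist a x ≤ q.length := by
      have := SimpleGraph.dist_le q.reverse
      simpa using this
    omega
  set f : V → Sym2 V := fun v =>
    if h : ∃ u, H.Adj v u ∧ H.dist a u < H.dist a v then s(v, h.choose) else s(v, v) with hf
  apply Nat.add_le_add_right
  apply Finset.card_le_card_of_injOn f
  · intro v hv
    have h := hex v hv
    have hspec := h.choose_spec
    rw [hf]
    simp only [dif_pos h]
    have hvr : H.Reachable a v := by
      simpa [hC] using (Finset.mem_erase.mp hv).2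
    rw [hT]
    simp only [Finset.mem_coe, Finset.mem_filter, Finset.mem_univ, true_and]
    refine ⟨?_, hspec.1⟩
    intro w hw
    rcases Sym2.mem_iff.mp hw with rfl | rfl
    · exact hvr
    · exact hvr.trans hspec.1.reachable
  · intro v hv v' hv' hvv'
    have h := hex v hv
    have h' := hex v' hv'
    rw [hf] at hvv'
    simp only [dif_pos h, dif_pos h'] at hvv'
    rcases Sym2.eq_iff.mp hvv' with ⟨rfl, _⟩ | ⟨h1, h2⟩
    · rfl
    · exfalso
      have hc1 := h.choose_spec.2
      have hc2 := h'.choose_spec.2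
      rw [← h1] at hc2
      rw [h2] at hc1
      omega


lemma support_mapLe_eq {G H : SimpleGraph V} (hle : H ≤ G) {u v : V} (p : H.Walk u v) :
    (p.mapLe hle).support = p.support := by
  simp only [SimpleGraph.Walk.mapLe, SimpleGraph.Walk.support_map]
  have : ⇑(SimpleGraph.Hom.ofLE hle) = id := rfl
  rw [this, List.map_id]

section WithPM
variable {G : SimpleGraph V} {A₁ A₂ : Finset V} {M₁ M₂ : Finset (Sym2 V)} {a : V}
variable (h₁ : PM G A₁ M₁) (h₂ : PM G A₂ M₂)

include h₁ h₂

lemma edge_G {e : Sym2 V} (he : e ∈ M₁ ∪ M₂) : e ∈ G.edgeSet := by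
  rcases Finset.mem_union.mp he with h | h
  · exact h₁.1.1 e h
  · exact h₂.1.1 e h

lemma HH_le : HH M₁ M₂ ≤ G := by
  intro x y hxy
  rw [HH, SimpleGraph.fromEdgeSet_adj] at hxy
  have : s(x, y) ∈ DD M₁ M₂ := hxy.1
  exact (SimpleGraph.mem_edgeSet G).mp (edge_G h₁ h₂ ((mem_DD_iff M₁ M₂).mp this).1)

lemma DD_adj {x y : V} (hxy : s(x, y) ∈ DD M₁ M₂) : (HH M₁ M₂).Adj x y := by
  rw [HH, SimpleGraph.fromEdgeSet_adj]
  refine ⟨hxy, ?_⟩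
  have := edge_G h₁ h₂ ((mem_DD_iff M₁ M₂).mp hxy).1
  rintro rfl
  exact G.irrefl ((SimpleGraph.mem_edgeSet G).mp this)

lemma closure {e : Sym2 V} {v : V} (he : e ∈ DD M₁ M₂) (hv : v ∈ e)
    (hvc : v ∈ comp M₁ M₂ a) : e ∈ TT M₁ M₂ a := by
  induction e with
  | _ x y =>
    have hadj : (HH M₁ M₂).Adj x y := DD_adj h₁ h₂ he
    rw [TT, Finset.mem_filter]
    refine ⟨he, ?_⟩
    have hxy : x ∈ comp M₁ M₂ a ∧ y ∈ comp M₁ M₂ a := by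
      rcases Sym2.mem_iff.mp hv with rfl | rfl
      · exact ⟨hvc, hvc.trans hadj.reachable⟩
      · exact ⟨hvc.trans hadj.symm.reachable, hvc⟩
    intro w hw
    rcases Sym2.mem_iff.mp hw with rfl | rfl
    · exact hxy.1
    · exact hxy.2

omit h₂

lemma unique_edge {e f : Sym2 V} {v : V} (he : e ∈ M₁) (hf : f ∈ M₁) (hve : v ∈ e)
    (hvf : v ∈ f) : e = f := by
  by_contra h
  exact h₁.1.2.2 e he f hf h v hve hvf

lemma cover_iff {v : V} : v ∈ A₁ ↔ ∃ e ∈ M₁, v ∈ e := by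
  constructor
  · exact h₁.2 v
  · rintro ⟨e, he, hve⟩
    exact h₁.1.2.1 e he v hve

include h₂

/-- the toggled matching is a perfect matching of the induced subgraph on the swapped set -/
lemma tog_PM {A' : Finset V}
    (hA' : ∀ v, v ∈ A' ↔ ((v ∈ comp M₁ M₂ a ∧ v ∈ A₂) ∨ (v ∉ comp M₁ M₂ a ∧ v ∈ A₁))) :
    PM G A' (tog M₁ M₂ a) := by
  have hTD := TT_subset_DD M₁ M₂ a
  constructor
  · refine ⟨?_, ?_, ?_⟩
    · -- edges of G
      intro e he
      rcases Finset.mem_union.mp he with h | h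
      · exact h₁.1.1 e (Finset.mem_sdiff.mp h).1
      · exact h₂.1.1 e (Finset.mem_inter.mp h).2
    · -- edges inside A'
      intro e he v hv
      rw [hA' v]
      rcases Finset.mem_union.mp he with h | h
      · obtain ⟨heM₁, heT⟩ := Finset.mem_sdiff.mp h
        by_cases hvc : v ∈ comp M₁ M₂ a
        · left
          refine ⟨hvc, ?_⟩
          by_cases heM₂ : e ∈ M₂
          · exact (cover_iff h₂).mpr ⟨e, heM₂, hv⟩
          · exact absurd (closure h₁ h₂ ((mem_DD_iff M₁ M₂).mpr
              ⟨Finset.mem_union_left _ heM₁, fun hc => heM₂ hc.2⟩) hv hvc) heT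
        · exact Or.inr ⟨hvc, h₁.1.2.1 e heM₁ v hv⟩
      · obtain ⟨heT, heM₂⟩ := Finset.mem_inter.mp h
        have hvc : v ∈ comp M₁ M₂ a := (Finset.mem_filter.mp heT).2 v hv
        exact Or.inl ⟨hvc, h₂.1.2.1 e heM₂ v hv⟩
    · -- pairwise disjoint
      intro e he f hf hef v hve hvf
      have key : ∀ g ∈ tog M₁ M₂ a, v ∈ g → (v ∈ comp M₁ M₂ a → g ∈ M₂) ∧
          (v ∉ comp M₁ M₂ a → g ∈ M₁) := by
        intro g hg hvg
        rcases Finset.mem_union.mp hg with h | h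
        · obtain ⟨hgM₁, hgT⟩ := Finset.mem_sdiff.mp h
          constructor
          · intro hvc
            by_contra hgM₂
            exact hgT (closure h₁ h₂ ((mem_DD_iff M₁ M₂).mpr
              ⟨Finset.mem_union_left _ hgM₁, fun hc => hgM₂ hc.2⟩) hvg hvc)
          · intro _; exact hgM₁
        · obtain ⟨hgT, hgM₂⟩ := Finset.mem_inter.mp h
          have : v ∈ comp M₁ M₂ a := (Finset.mem_filter.mp hgT).2 v hvg
          exact ⟨fun _ => hgM₂, fun hc => absurd this hc⟩
      by_cases hvc : v ∈ comp M₁ M₂ a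
      · exact hef (unique_edge h₂ ((key e he hve).1 hvc) ((key f hf hvf).1 hvc) hve hvf)
      · exact hef (unique_edge h₁ ((key e he hve).2 hvc) ((key f hf hvf).2 hvc) hve hvf)
  · -- covering A'
    intro v hv
    rcases (hA' v).mp hv with ⟨hvc, hvA₂⟩ | ⟨hvc, hvA₁⟩
    · obtain ⟨e, heM₂, hve⟩ := (cover_iff h₂).mp hvA₂
      by_cases heM₁ : e ∈ M₁
      · refine ⟨e, Finset.mem_union_left _ (Finset.mem_sdiff.mpr ⟨heM₁, fun hT => ?_⟩), hve⟩
        exact ((mem_DD_iff M₁ M₂).mp (hTD hT)).2 ⟨heM₁, heM₂⟩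
      · refine ⟨e, Finset.mem_union_right _ (Finset.mem_inter.mpr ⟨?_, heM₂⟩), hve⟩
        exact closure h₁ h₂ ((mem_DD_iff M₁ M₂).mpr
          ⟨Finset.mem_union_right _ heM₂, fun hc => heM₁ hc.1⟩) hve hvc
    · obtain ⟨e, heM₁, hve⟩ := (cover_iff h₁).mp hvA₁
      refine ⟨e, Finset.mem_union_left _ (Finset.mem_sdiff.mpr ⟨heM₁, fun hT => ?_⟩), hve⟩
      exact hvc ((Finset.mem_filter.mp hT).2 v hve)


lemma DD_not_diag {e : Sym2 V} (he : e ∈ DD M₁ M₂) : ¬ e.IsDiag := by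
  intro hd
  have := edge_G h₁ h₂ ((mem_DD_iff M₁ M₂).mp he).1
  exact (SimpleGraph.not_isDiag_of_mem_edgeSet G this) hd

/-- case analysis on the number of symmetric-difference edges at a vertex -/
lemma dd_cases (v : V) :
    (((DD M₁ M₂).filter (fun e => v ∈ e)).card = 1 ∧ ¬(v ∈ A₁ ↔ v ∈ A₂)) ∨
    ((((DD M₁ M₂).filter (fun e => v ∈ e)).card = 0 ∨
      ((DD M₁ M₂).filter (fun e => v ∈ e)).card = 2) ∧ (v ∈ A₁ ↔ v ∈ A₂)) := by
  by_cases hc₁ : ∃ e ∈ M₁, v ∈ e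
  · obtain ⟨e₁, he₁, hve₁⟩ := hc₁
    by_cases hc₂ : ∃ e ∈ M₂, v ∈ e
    · obtain ⟨e₂, he₂, hve₂⟩ := hc₂
      have hiff : v ∈ A₁ ↔ v ∈ A₂ := by
        rw [cover_iff h₁, cover_iff h₂]
        exact ⟨fun _ => ⟨e₂, he₂, hve₂⟩, fun _ => ⟨e₁, he₁, hve₁⟩⟩
      right
      refine ⟨?_, hiff⟩
      by_cases he : e₁ = e₂
      · left
        rw [Finset.card_eq_zero]
        ext f
        simp only [Finset.mem_filter, Finset.notMem_empty, iff_false]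
        rintro ⟨hf, hvf⟩
        rw [mem_DD_iff] at hf
        rcases Finset.mem_union.mp hf.1 with h | h
        · exact hf.2 ⟨h, (unique_edge h₁ h he₁ hvf hve₁) ▸ (he ▸ he₂)⟩
        · exact hf.2 ⟨(unique_edge h₂ h he₂ hvf hve₂) ▸ (he ▸ he₁), h⟩
      · right
        have h12 : e₁ ∉ M₂ := fun h => he (unique_edge h₂ h he₂ hve₁ hve₂)
        have h21 : e₂ ∉ M₁ := fun h => he (unique_edge h₁ he₁ h hve₁ hve₂)
        have : (DD M₁ M₂).filter (fun e => v ∈ e) = {e₁, e₂} := by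
          ext f
          simp only [Finset.mem_filter, Finset.mem_insert, Finset.mem_singleton]
          constructor
          · rintro ⟨hf, hvf⟩
            rcases Finset.mem_union.mp ((mem_DD_iff M₁ M₂).mp hf).1 with h | h
            · exact Or.inl (unique_edge h₁ h he₁ hvf hve₁)
            · exact Or.inr (unique_edge h₂ h he₂ hvf hve₂)
          · rintro (rfl | rfl)
            · exact ⟨(mem_DD_iff M₁ M₂).mpr ⟨Finset.mem_union_left _ he₁,
                fun hc => h12 hc.2⟩, hve₁⟩
            · exact ⟨(mem_DD_iff M₁ M₂).mpr ⟨Finset.mem_union_right _ he₂,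
                fun hc => h21 hc.1⟩, hve₂⟩
        rw [this, Finset.card_insert_of_notMem (by simpa using he), Finset.card_singleton]
    · left
      have hiff : ¬(v ∈ A₁ ↔ v ∈ A₂) := by
        rw [cover_iff h₁, cover_iff h₂]
        intro h
        exact hc₂ (h.mp ⟨e₁, he₁, hve₁⟩)
      refine ⟨?_, hiff⟩
      have : (DD M₁ M₂).filter (fun e => v ∈ e) = {e₁} := by
        ext f
        simp only [Finset.mem_filter, Finset.mem_singleton]
        constructor
        · rintro ⟨hf, hvf⟩
          rcases Finset.mem_union.mp ((mem_DD_iff M₁ M₂).mp hf).1 with h | h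
          · exact unique_edge h₁ h he₁ hvf hve₁
          · exact absurd ⟨f, h, hvf⟩ hc₂
        · rintro rfl
          exact ⟨(mem_DD_iff M₁ M₂).mpr ⟨Finset.mem_union_left _ he₁,
            fun hc => hc₂ ⟨_, hc.2, hve₁⟩⟩, hve₁⟩
      rw [this, Finset.card_singleton]
  · by_cases hc₂ : ∃ e ∈ M₂, v ∈ e
    · obtain ⟨e₂, he₂, hve₂⟩ := hc₂
      left
      have hiff : ¬(v ∈ A₁ ↔ v ∈ A₂) := by
        rw [cover_iff h₁, cover_iff h₂]
        intro h
        exact hc₁ (h.mpr ⟨e₂, he₂, hve₂⟩)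
      refine ⟨?_, hiff⟩
      have : (DD M₁ M₂).filter (fun e => v ∈ e) = {e₂} := by
        ext f
        simp only [Finset.mem_filter, Finset.mem_singleton]
        constructor
        · rintro ⟨hf, hvf⟩
          rcases Finset.mem_union.mp ((mem_DD_iff M₁ M₂).mp hf).1 with h | h
          · exact absurd ⟨f, h, hvf⟩ hc₁
          · exact unique_edge h₂ h he₂ hvf hve₂
        · rintro rfl
          exact ⟨(mem_DD_iff M₁ M₂).mpr ⟨Finset.mem_union_right _ he₂,
            fun hc => hc₁ ⟨_, hc.1, hve₂⟩⟩, hve₂⟩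
      rw [this, Finset.card_singleton]
    · right
      have hiff : v ∈ A₁ ↔ v ∈ A₂ := by
        rw [cover_iff h₁, cover_iff h₂]
        exact ⟨fun h => absurd h hc₁, fun h => absurd h hc₂⟩
      refine ⟨Or.inl ?_, hiff⟩
      rw [Finset.card_eq_zero]
      ext f
      simp only [Finset.mem_filter, Finset.notMem_empty, iff_false]
      rintro ⟨hf, hvf⟩
      rcases Finset.mem_union.mp ((mem_DD_iff M₁ M₂).mp hf).1 with h | h
      · exact hc₁ ⟨f, h, hvf⟩
      · exact hc₂ ⟨f, h, hvf⟩

/-- inside the component, local symmetric-difference edges are exactly local `TT` edges -/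
lemma local_TT {v : V} (hv : v ∈ comp M₁ M₂ a) :
    (DD M₁ M₂).filter (fun e => v ∈ e) = (TT M₁ M₂ a).filter (fun e => v ∈ e) := by
  ext f
  simp only [Finset.mem_filter]
  exact ⟨fun ⟨hf, hvf⟩ => ⟨closure h₁ h₂ hf hvf hv, hvf⟩,
    fun ⟨hf, hvf⟩ => ⟨TT_subset_DD M₁ M₂ a hf, hvf⟩⟩

/-- handshake within the component -/
lemma handshake :
    ∑ v ∈ compF M₁ M₂ a, ((DD M₁ M₂).filter (fun e => v ∈ e)).card = 2 * (TT M₁ M₂ a).card := by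
  have h0 : ∀ v ∈ compF M₁ M₂ a,
      ((DD M₁ M₂).filter (fun e => v ∈ e)).card = ((TT M₁ M₂ a).filter (fun e => v ∈ e)).card := by
    intro v hv
    rw [local_TT h₁ h₂ (by simpa [compF] using hv)]
  rw [Finset.sum_congr rfl h0]
  have : ∀ v ∈ compF M₁ M₂ a, ((TT M₁ M₂ a).filter (fun e => v ∈ e)).card =
      ∑ e ∈ TT M₁ M₂ a, if v ∈ e then 1 else 0 := by
    intro v _
    rw [Finset.card_filter]
  rw [Finset.sum_congr rfl this, Finset.sum_comm]
  have h2 : ∀ e ∈ TT M₁ M₂ a, (∑ v ∈ compF M₁ M₂ a, if v ∈ e then 1 else 0) = 2 := by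
    intro e he
    rw [← Finset.card_filter]
    have hDD := TT_subset_DD M₁ M₂ a he
    have hnd := DD_not_diag h₁ h₂ hDD
    have hcomp := (Finset.mem_filter.mp he).2
    induction e with
    | _ x y =>
      have hxy : x ≠ y := by simpa [Sym2.mk_isDiag_iff] using hnd
      have : (compF M₁ M₂ a).filter (fun v => v ∈ s(x, y)) = {x, y} := by
        ext v
        simp only [Finset.mem_filter, compF, Finset.mem_univ, true_and, Finset.mem_insert,
          Finset.mem_singleton, Sym2.mem_iff]
        constructor
        · rintro ⟨_, h⟩; exact h
        · rintro (rfl | rfl)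
          · exact ⟨hcomp v (by simp), Or.inl rfl⟩
          · exact ⟨hcomp v (by simp), Or.inr rfl⟩
      rw [this, Finset.card_insert_of_notMem (by simpa using hxy), Finset.card_singleton]
  rw [Finset.sum_congr rfl h2, Finset.sum_const, smul_eq_mul, mul_comm]


lemma TT_eq_filter :
    Finset.univ.filter (fun e : Sym2 V =>
      (∀ v ∈ e, (HH M₁ M₂).Reachable a v) ∧ e ∈ (HH M₁ M₂).edgeSet) = TT M₁ M₂ a := by
  ext e
  simp only [Finset.mem_filter, Finset.mem_univ, true_and, TT]
  constructor
  · rintro ⟨hre, he⟩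
    have heDD : e ∈ DD M₁ M₂ := by
      rw [HH, SimpleGraph.edgeSet_fromEdgeSet] at he
      exact Finset.mem_coe.mp he.1
    exact ⟨heDD, hre⟩
  · rintro ⟨heDD, hre⟩
    refine ⟨hre, ?_⟩
    rw [HH, SimpleGraph.edgeSet_fromEdgeSet]
    exact ⟨Finset.mem_coe.mpr heDD, DD_not_diag h₁ h₂ heDD⟩

lemma compF_card_le : (compF M₁ M₂ a).card ≤ (TT M₁ M₂ a).card + 1 := by
  have h := card_comp_le (HH M₁ M₂) a
  rw [TT_eq_filter h₁ h₂] at h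
  have : compF M₁ M₂ a = Finset.univ.filter (fun v => (HH M₁ M₂).Reachable a v) := by
    ext v; simp [compF, comp, Set.mem_setOf_eq]
    exact ⟨fun h => (@Finset.mem_filter _ _ (fun _ => Classical.propDecidable _) _ _).mp h |>.2,
      fun h => (@Finset.mem_filter _ _ (fun _ => Classical.propDecidable _) _ _).mpr ⟨Finset.mem_univ _, h⟩⟩
  rw [this]
  exact h

lemma odds_card :
    Even (((compF M₁ M₂ a).filter (fun v => ¬(v ∈ A₁ ↔ v ∈ A₂))).card) ∧
      ((compF M₁ M₂ a).filter (fun v => ¬(v ∈ A₁ ↔ v ∈ A₂))).card ≤ 2 := by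
  have hsum := handshake h₁ h₂ (a := a)
  have hodd_eq : (compF M₁ M₂ a).filter (fun v => ¬(v ∈ A₁ ↔ v ∈ A₂)) =
      (compF M₁ M₂ a).filter (fun v => Odd ((DD M₁ M₂).filter (fun e => v ∈ e)).card) := by
    apply Finset.filter_congr
    intro v _
    rcases dd_cases h₁ h₂ v with ⟨hd1, hd2⟩ | ⟨hd1, hd2⟩
    · simp [hd1, hd2]
    · rcases hd1 with hd1 | hd1 <;> simp [hd1, hd2]
  have heven : Even (((compF M₁ M₂ a).filter
      (fun v => Odd ((DD M₁ M₂).filter (fun e => v ∈ e)).card)).card) := by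
    rw [← Finset.even_sum_iff_even_card_odd, hsum]
    exact even_two_mul _
  refine ⟨by rw [hodd_eq]; exact heven, ?_⟩
  have hle : ∑ v ∈ compF M₁ M₂ a, (((DD M₁ M₂).filter (fun e => v ∈ e)).card +
      (if ¬(v ∈ A₁ ↔ v ∈ A₂) then 1 else 0)) ≤ ∑ _v ∈ compF M₁ M₂ a, 2 := by
    apply Finset.sum_le_sum
    intro v _
    rcases dd_cases h₁ h₂ v with ⟨hd1, hd2⟩ | ⟨hd1, hd2⟩
    · simp [hd1, hd2]
    · rcases hd1 with hd1 | hd1 <;> simp [hd1, hd2]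
  rw [Finset.sum_add_distrib, hsum, Finset.sum_const, smul_eq_mul] at hle
  have hcardO : ((compF M₁ M₂ a).filter (fun v => ¬(v ∈ A₁ ↔ v ∈ A₂))).card =
      ∑ v ∈ compF M₁ M₂ a, (if ¬(v ∈ A₁ ↔ v ∈ A₂) then 1 else 0) := Finset.card_filter _ _
  have hCle := compF_card_le h₁ h₂ (a := a)
  omega

lemma comp_pair (hodd_a : ¬(a ∈ A₁ ↔ a ∈ A₂)) :
    ∃ x, x ≠ a ∧ ¬(x ∈ A₁ ↔ x ∈ A₂) ∧ x ∈ comp M₁ M₂ a ∧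
      ∀ y, y ∈ comp M₁ M₂ a → ¬(y ∈ A₁ ↔ y ∈ A₂) → y = a ∨ y = x := by
  obtain ⟨heven, hle⟩ := odds_card h₁ h₂ (a := a)
  have haC : a ∈ compF M₁ M₂ a :=
    Finset.mem_filter.mpr ⟨Finset.mem_univ a, SimpleGraph.Reachable.refl a⟩
  have haO : a ∈ (compF M₁ M₂ a).filter (fun v => ¬(v ∈ A₁ ↔ v ∈ A₂)) :=
    Finset.mem_filter.mpr ⟨haC, hodd_a⟩
  have h1 : 0 < ((compF M₁ M₂ a).filter (fun v => ¬(v ∈ A₁ ↔ v ∈ A₂))).card :=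
    Finset.card_pos.mpr ⟨a, haO⟩
  have hcard : ((compF M₁ M₂ a).filter (fun v => ¬(v ∈ A₁ ↔ v ∈ A₂))).card = 2 := by
    obtain ⟨k, hk⟩ := heven
    omega
  obtain ⟨u, z, huz, hO⟩ := Finset.card_eq_two.mp hcard
  have hmem : ∀ y, y ∈ comp M₁ M₂ a → ¬(y ∈ A₁ ↔ y ∈ A₂) → y = u ∨ y = z := by
    intro y hy hyodd
    have : y ∈ (compF M₁ M₂ a).filter (fun v => ¬(v ∈ A₁ ↔ v ∈ A₂)) :=
      Finset.mem_filter.mpr ⟨Finset.mem_filter.mpr ⟨Finset.mem_univ y, hy⟩, hyodd⟩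
    rw [hO] at this
    simpa using this
  have hau : a = u ∨ a = z := by
    have := haO; rw [hO] at this; simpa using this
  have hOu : u ∈ (compF M₁ M₂ a).filter (fun v => ¬(v ∈ A₁ ↔ v ∈ A₂)) := by
    rw [hO]; simp
  have hOz : z ∈ (compF M₁ M₂ a).filter (fun v => ¬(v ∈ A₁ ↔ v ∈ A₂)) := by
    rw [hO]; simp
  have hcompu : u ∈ comp M₁ M₂ a := by
    have := (Finset.mem_filter.mp hOu).1
    simpa [compF] using this
  have hcompz : z ∈ comp M₁ M₂ a := by
    have := (Finset.mem_filter.mp hOz).1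
    simpa [compF] using this
  rcases hau with rfl | rfl
  · exact ⟨z, fun h => huz h.symm, (Finset.mem_filter.mp hOz).2, hcompz, hmem⟩
  · refine ⟨u, fun h => huz h, (Finset.mem_filter.mp hOu).2, hcompu, ?_⟩
    · intro y hy hyodd
      rcases hmem y hy hyodd with h | h
      · exact Or.inr h
      · exact Or.inl h


lemma comp_target {b c d : V}
    (hodd : ∀ v, ¬(v ∈ A₁ ↔ v ∈ A₂) ↔ (v = a ∨ v = b ∨ v = c ∨ v = d))
    (hab : a ≠ b) (hac : a ≠ c) (had : a ≠ d) (hbc : b ≠ c) (hbd : b ≠ d) (hcd : c ≠ d)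
    (hnc : ¬ ∃ (P : G.Walk a c) (Q : G.Walk b d), P.IsPath ∧ Q.IsPath ∧ WalkDisjoint P Q) :
    ∃ x, (x = b ∨ x = d) ∧ x ∈ comp M₁ M₂ a ∧
      ∀ y, (y = b ∨ y = c ∨ y = d) → y ∈ comp M₁ M₂ a → y = x := by
  have hodd_a : ¬(a ∈ A₁ ↔ a ∈ A₂) := (hodd a).mpr (Or.inl rfl)
  obtain ⟨x, hxa, hxodd, hxcomp, huniq⟩ := comp_pair h₁ h₂ hodd_a
  have hxbcd : x = b ∨ x = c ∨ x = d := by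
    rcases (hodd x).mp hxodd with h | h | h | h
    · exact absurd h hxa
    · exact Or.inl h
    · exact Or.inr (Or.inl h)
    · exact Or.inr (Or.inr h)
  have huniq' : ∀ y, (y = b ∨ y = c ∨ y = d) → y ∈ comp M₁ M₂ a → y = x := by
    intro y hy hycomp
    have hyodd : ¬(y ∈ A₁ ↔ y ∈ A₂) := (hodd y).mpr (Or.inr hy)
    rcases huniq y hycomp hyodd with h | h
    · exfalso
      rcases hy with rfl | rfl | rfl
      · exact hab h.symm
      · exact hac h.symm
      · exact had h.symm
    · exact h
  rcases hxbcd with rfl | rfl | rfl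
  · exact ⟨x, Or.inl rfl, hxcomp, huniq'⟩
  · -- the component of `a` ends at `c`: contradiction with planarity
    exfalso
    have hbcomp : b ∉ comp M₁ M₂ a := fun h => hbc (huniq' b (Or.inl rfl) h)
    have hodd_b : ¬(b ∈ A₁ ↔ b ∈ A₂) := (hodd b).mpr (Or.inr (Or.inl rfl))
    obtain ⟨x', hx'b, hx'odd, hx'comp, huniq2⟩ := comp_pair h₁ h₂ (a := b) hodd_b
    have hx'd : x' = d := by
      rcases (hodd x').mp hx'odd with h | h | h | h
      · exfalso
        subst h
        exact hbcomp (SimpleGraph.Reachable.symm hx'comp)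
      · exact absurd h hx'b
      · exfalso
        subst h
        exact hbcomp (SimpleGraph.Reachable.trans hxcomp (SimpleGraph.Reachable.symm hx'comp))
      · exact h
    subst hx'd
    obtain ⟨p⟩ := hxcomp
    obtain ⟨q⟩ := hx'comp
    have hle : HH M₁ M₂ ≤ G := HH_le h₁ h₂
    refine hnc ⟨p.bypass.mapLe hle, q.bypass.mapLe hle,
      (SimpleGraph.Walk.mapLe_isPath hle).mpr p.bypass_isPath,
      (SimpleGraph.Walk.mapLe_isPath hle).mpr q.bypass_isPath, ?_⟩
    intro z hzP hzQ
    rw [support_mapLe_eq] at hzP hzQ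
    have hza : (HH M₁ M₂).Reachable a z :=
      walk_reach p (p.support_bypass_subset hzP)
    have hzb : (HH M₁ M₂).Reachable b z :=
      walk_reach q (q.support_bypass_subset hzQ)
    exact hbcomp (hza.trans hzb.symm)
  · exact ⟨x, Or.inr rfl, hxcomp, huniq'⟩


omit h₁ h₂ in
lemma typeA {b c d : V}
    (h₁ : PM G (Finset.univ \ {b}) M₁) (h₂ : PM G (Finset.univ \ {a, c, d}) M₂)
    (hab : a ≠ b) (hac : a ≠ c) (had : a ≠ d) (hbc : b ≠ c) (hbd : b ≠ d) (hcd : c ≠ d)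
    (hnc : ¬ ∃ (P : G.Walk a c) (Q : G.Walk b d), P.IsPath ∧ Q.IsPath ∧ WalkDisjoint P Q) :
    (PM G (Finset.univ \ {a}) (tog M₁ M₂ a) ∧
        PM G (Finset.univ \ {b, c, d}) (tog M₂ M₁ a)) ∨
    (PM G (Finset.univ \ {a, b, d}) (tog M₁ M₂ a) ∧
        PM G (Finset.univ \ {c}) (tog M₂ M₁ a)) := by
  have hodd : ∀ v, ¬(v ∈ Finset.univ \ ({b} : Finset V) ↔
      v ∈ Finset.univ \ ({a, c, d} : Finset V)) ↔ (v = a ∨ v = b ∨ v = c ∨ v = d) := by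
    intro v
    simp only [Finset.mem_sdiff, Finset.mem_univ, true_and, Finset.mem_singleton,
      Finset.mem_insert, not_or]
    by_cases h1 : v = a <;> by_cases h2 : v = b <;> by_cases h3 : v = c <;>
      by_cases h4 : v = d <;> simp_all
  obtain ⟨x, hx, hxcomp, huniq⟩ := comp_target h₁ h₂ hodd hab hac had hbc hbd hcd hnc
  have hacomp : a ∈ comp M₁ M₂ a := SimpleGraph.Reachable.refl a
  have hcc : comp M₂ M₁ a = comp M₁ M₂ a := comp_comm M₂ M₁ a
  rcases hx with rfl | rfl
  · -- x = b : result (univ\{a}, univ\{b,c,d})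
    have hcn : c ∉ comp M₁ M₂ a := fun h => hbc ((huniq c (Or.inr (Or.inl rfl)) h).symm)
    have hdn : d ∉ comp M₁ M₂ a := fun h => hbd ((huniq d (Or.inr (Or.inr rfl)) h).symm)
    left
    constructor
    · apply tog_PM h₁ h₂
      intro v
      have e1 : v ∈ comp M₁ M₂ a → ¬ v = c := fun hv h => hcn (h ▸ hv)
      have e2 : v ∈ comp M₁ M₂ a → ¬ v = d := fun hv h => hdn (h ▸ hv)
      have e3 : ¬ v ∈ comp M₁ M₂ a → ¬ v = a := fun hv h => hv (h ▸ hacomp)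
      have e4 : ¬ v ∈ comp M₁ M₂ a → ¬ v = x := fun hv h => hv (h ▸ hxcomp)
      simp only [Finset.mem_sdiff, Finset.mem_univ, true_and, Finset.mem_singleton,
        Finset.mem_insert, not_or]
      tauto
    · apply tog_PM h₂ h₁
      rw [hcc]
      intro v
      have e1 : v ∈ comp M₁ M₂ a → ¬ v = c := fun hv h => hcn (h ▸ hv)
      have e2 : v ∈ comp M₁ M₂ a → ¬ v = d := fun hv h => hdn (h ▸ hv)
      have e3 : ¬ v ∈ comp M₁ M₂ a → ¬ v = a := fun hv h => hv (h ▸ hacomp)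
      have e4 : ¬ v ∈ comp M₁ M₂ a → ¬ v = x := fun hv h => hv (h ▸ hxcomp)
      simp only [Finset.mem_sdiff, Finset.mem_univ, true_and, Finset.mem_singleton,
        Finset.mem_insert, not_or]
      tauto
  · -- x = d : result (univ\{a,b,d}, univ\{c})
    have hbn : b ∉ comp M₁ M₂ a := fun h => hbd (huniq b (Or.inl rfl) h)
    have hcn : c ∉ comp M₁ M₂ a := fun h => hcd (huniq c (Or.inr (Or.inl rfl)) h)
    right
    constructor
    · apply tog_PM h₁ h₂
      intro v
      have e1 : v ∈ comp M₁ M₂ a → ¬ v = c := fun hv h => hcn (h ▸ hv)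
      have e2 : v ∈ comp M₁ M₂ a → ¬ v = b := fun hv h => hbn (h ▸ hv)
      have e3 : ¬ v ∈ comp M₁ M₂ a → ¬ v = a := fun hv h => hv (h ▸ hacomp)
      have e4 : ¬ v ∈ comp M₁ M₂ a → ¬ v = x := fun hv h => hv (h ▸ hxcomp)
      simp only [Finset.mem_sdiff, Finset.mem_univ, true_and, Finset.mem_singleton,
        Finset.mem_insert, not_or]
      tauto
    · apply tog_PM h₂ h₁
      rw [hcc]
      intro v
      have e1 : v ∈ comp M₁ M₂ a → ¬ v = c := fun hv h => hcn (h ▸ hv)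
      have e2 : v ∈ comp M₁ M₂ a → ¬ v = b := fun hv h => hbn (h ▸ hv)
      have e3 : ¬ v ∈ comp M₁ M₂ a → ¬ v = a := fun hv h => hv (h ▸ hacomp)
      have e4 : ¬ v ∈ comp M₁ M₂ a → ¬ v = x := fun hv h => hv (h ▸ hxcomp)
      simp only [Finset.mem_sdiff, Finset.mem_univ, true_and, Finset.mem_singleton,
        Finset.mem_insert, not_or]
      tauto


omit h₁ h₂ in
lemma typeB {b c d : V}
    (h₁ : PM G (Finset.univ \ {d}) M₁) (h₂ : PM G (Finset.univ \ {a, b, c}) M₂)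
    (hab : a ≠ b) (hac : a ≠ c) (had : a ≠ d) (hbc : b ≠ c) (hbd : b ≠ d) (hcd : c ≠ d)
    (hnc : ¬ ∃ (P : G.Walk a c) (Q : G.Walk b d), P.IsPath ∧ Q.IsPath ∧ WalkDisjoint P Q) :
    (PM G (Finset.univ \ {a}) (tog M₁ M₂ a) ∧
        PM G (Finset.univ \ {b, c, d}) (tog M₂ M₁ a)) ∨
    (PM G (Finset.univ \ {a, b, d}) (tog M₁ M₂ a) ∧
        PM G (Finset.univ \ {c}) (tog M₂ M₁ a)) := by
  have hodd : ∀ v, ¬(v ∈ Finset.univ \ ({d} : Finset V) ↔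
      v ∈ Finset.univ \ ({a, b, c} : Finset V)) ↔ (v = a ∨ v = b ∨ v = c ∨ v = d) := by
    intro v
    simp only [Finset.mem_sdiff, Finset.mem_univ, true_and, Finset.mem_singleton,
      Finset.mem_insert, not_or]
    by_cases h1 : v = a <;> by_cases h2 : v = b <;> by_cases h3 : v = c <;>
      by_cases h4 : v = d <;> simp_all
  obtain ⟨x, hx, hxcomp, huniq⟩ := comp_target h₁ h₂ hodd hab hac had hbc hbd hcd hnc
  have hacomp : a ∈ comp M₁ M₂ a := SimpleGraph.Reachable.refl a
  have hcc : comp M₂ M₁ a = comp M₁ M₂ a := comp_comm M₂ M₁ a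
  rcases hx with rfl | rfl
  · -- x = b : result (univ\{a}, univ\{b,c,d})
    have hcn : c ∉ comp M₁ M₂ a := fun h => hbc ((huniq c (Or.inr (Or.inl rfl)) h).symm)
    have hdn : d ∉ comp M₁ M₂ a := fun h => hbd ((huniq d (Or.inr (Or.inr rfl)) h).symm)
    right
    constructor
    · apply tog_PM h₁ h₂
      intro v
      have e1 : v ∈ comp M₁ M₂ a → ¬ v = c := fun hv h => hcn (h ▸ hv)
      have e2 : v ∈ comp M₁ M₂ a → ¬ v = d := fun hv h => hdn (h ▸ hv)
      have e3 : ¬ v ∈ comp M₁ M₂ a → ¬ v = a := fun hv h => hv (h ▸ hacomp)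
      have e4 : ¬ v ∈ comp M₁ M₂ a → ¬ v = x := fun hv h => hv (h ▸ hxcomp)
      simp only [Finset.mem_sdiff, Finset.mem_univ, true_and, Finset.mem_singleton,
        Finset.mem_insert, not_or]
      tauto
    · apply tog_PM h₂ h₁
      rw [hcc]
      intro v
      have e1 : v ∈ comp M₁ M₂ a → ¬ v = c := fun hv h => hcn (h ▸ hv)
      have e2 : v ∈ comp M₁ M₂ a → ¬ v = d := fun hv h => hdn (h ▸ hv)
      have e3 : ¬ v ∈ comp M₁ M₂ a → ¬ v = a := fun hv h => hv (h ▸ hacomp)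
      have e4 : ¬ v ∈ comp M₁ M₂ a → ¬ v = x := fun hv h => hv (h ▸ hxcomp)
      simp only [Finset.mem_sdiff, Finset.mem_univ, true_and, Finset.mem_singleton,
        Finset.mem_insert, not_or]
      tauto
  · -- x = d : result (univ\{a,b,d}, univ\{c})
    have hbn : b ∉ comp M₁ M₂ a := fun h => hbd (huniq b (Or.inl rfl) h)
    have hcn : c ∉ comp M₁ M₂ a := fun h => hcd (huniq c (Or.inr (Or.inl rfl)) h)
    left
    constructor
    · apply tog_PM h₁ h₂
      intro v
      have e1 : v ∈ comp M₁ M₂ a → ¬ v = c := fun hv h => hcn (h ▸ hv)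
      have e2 : v ∈ comp M₁ M₂ a → ¬ v = b := fun hv h => hbn (h ▸ hv)
      have e3 : ¬ v ∈ comp M₁ M₂ a → ¬ v = a := fun hv h => hv (h ▸ hacomp)
      have e4 : ¬ v ∈ comp M₁ M₂ a → ¬ v = x := fun hv h => hv (h ▸ hxcomp)
      simp only [Finset.mem_sdiff, Finset.mem_univ, true_and, Finset.mem_singleton,
        Finset.mem_insert, not_or]
      tauto
    · apply tog_PM h₂ h₁
      rw [hcc]
      intro v
      have e1 : v ∈ comp M₁ M₂ a → ¬ v = c := fun hv h => hcn (h ▸ hv)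
      have e2 : v ∈ comp M₁ M₂ a → ¬ v = b := fun hv h => hbn (h ▸ hv)
      have e3 : ¬ v ∈ comp M₁ M₂ a → ¬ v = a := fun hv h => hv (h ▸ hacomp)
      have e4 : ¬ v ∈ comp M₁ M₂ a → ¬ v = x := fun hv h => hv (h ▸ hxcomp)
      simp only [Finset.mem_sdiff, Finset.mem_univ, true_and, Finset.mem_singleton,
        Finset.mem_insert, not_or]
      tauto


omit h₁ h₂ in
lemma typeC {b c d : V}
    (h₁ : PM G (Finset.univ \ {a}) M₁) (h₂ : PM G (Finset.univ \ {b, c, d}) M₂)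
    (hab : a ≠ b) (hac : a ≠ c) (had : a ≠ d) (hbc : b ≠ c) (hbd : b ≠ d) (hcd : c ≠ d)
    (hnc : ¬ ∃ (P : G.Walk a c) (Q : G.Walk b d), P.IsPath ∧ Q.IsPath ∧ WalkDisjoint P Q) :
    (PM G (Finset.univ \ {b}) (tog M₁ M₂ a) ∧
        PM G (Finset.univ \ {a, c, d}) (tog M₂ M₁ a)) ∨
    (PM G (Finset.univ \ {d}) (tog M₁ M₂ a) ∧
        PM G (Finset.univ \ {a, b, c}) (tog M₂ M₁ a)) := by
  have hodd : ∀ v, ¬(v ∈ Finset.univ \ ({a} : Finset V) ↔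
      v ∈ Finset.univ \ ({b, c, d} : Finset V)) ↔ (v = a ∨ v = b ∨ v = c ∨ v = d) := by
    intro v
    simp only [Finset.mem_sdiff, Finset.mem_univ, true_and, Finset.mem_singleton,
      Finset.mem_insert, not_or]
    by_cases h1 : v = a <;> by_cases h2 : v = b <;> by_cases h3 : v = c <;>
      by_cases h4 : v = d <;> simp_all
  obtain ⟨x, hx, hxcomp, huniq⟩ := comp_target h₁ h₂ hodd hab hac had hbc hbd hcd hnc
  have hacomp : a ∈ comp M₁ M₂ a := SimpleGraph.Reachable.refl a
  have hcc : comp M₂ M₁ a = comp M₁ M₂ a := comp_comm M₂ M₁ a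
  rcases hx with rfl | rfl
  · -- x = b : result (univ\{a}, univ\{b,c,d})
    have hcn : c ∉ comp M₁ M₂ a := fun h => hbc ((huniq c (Or.inr (Or.inl rfl)) h).symm)
    have hdn : d ∉ comp M₁ M₂ a := fun h => hbd ((huniq d (Or.inr (Or.inr rfl)) h).symm)
    left
    constructor
    · apply tog_PM h₁ h₂
      intro v
      have e1 : v ∈ comp M₁ M₂ a → ¬ v = c := fun hv h => hcn (h ▸ hv)
      have e2 : v ∈ comp M₁ M₂ a → ¬ v = d := fun hv h => hdn (h ▸ hv)
      have e3 : ¬ v ∈ comp M₁ M₂ a → ¬ v = a := fun hv h => hv (h ▸ hacomp)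
      have e4 : ¬ v ∈ comp M₁ M₂ a → ¬ v = x := fun hv h => hv (h ▸ hxcomp)
      simp only [Finset.mem_sdiff, Finset.mem_univ, true_and, Finset.mem_singleton,
        Finset.mem_insert, not_or]
      tauto
    · apply tog_PM h₂ h₁
      rw [hcc]
      intro v
      have e1 : v ∈ comp M₁ M₂ a → ¬ v = c := fun hv h => hcn (h ▸ hv)
      have e2 : v ∈ comp M₁ M₂ a → ¬ v = d := fun hv h => hdn (h ▸ hv)
      have e3 : ¬ v ∈ comp M₁ M₂ a → ¬ v = a := fun hv h => hv (h ▸ hacomp)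
      have e4 : ¬ v ∈ comp M₁ M₂ a → ¬ v = x := fun hv h => hv (h ▸ hxcomp)
      simp only [Finset.mem_sdiff, Finset.mem_univ, true_and, Finset.mem_singleton,
        Finset.mem_insert, not_or]
      tauto
  · -- x = d : result (univ\{a,b,d}, univ\{c})
    have hbn : b ∉ comp M₁ M₂ a := fun h => hbd (huniq b (Or.inl rfl) h)
    have hcn : c ∉ comp M₁ M₂ a := fun h => hcd (huniq c (Or.inr (Or.inl rfl)) h)
    right
    constructor
    · apply tog_PM h₁ h₂
      intro v
      have e1 : v ∈ comp M₁ M₂ a → ¬ v = c := fun hv h => hcn (h ▸ hv)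
      have e2 : v ∈ comp M₁ M₂ a → ¬ v = b := fun hv h => hbn (h ▸ hv)
      have e3 : ¬ v ∈ comp M₁ M₂ a → ¬ v = a := fun hv h => hv (h ▸ hacomp)
      have e4 : ¬ v ∈ comp M₁ M₂ a → ¬ v = x := fun hv h => hv (h ▸ hxcomp)
      simp only [Finset.mem_sdiff, Finset.mem_univ, true_and, Finset.mem_singleton,
        Finset.mem_insert, not_or]
      tauto
    · apply tog_PM h₂ h₁
      rw [hcc]
      intro v
      have e1 : v ∈ comp M₁ M₂ a → ¬ v = c := fun hv h => hcn (h ▸ hv)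
      have e2 : v ∈ comp M₁ M₂ a → ¬ v = b := fun hv h => hbn (h ▸ hv)
      have e3 : ¬ v ∈ comp M₁ M₂ a → ¬ v = a := fun hv h => hv (h ▸ hacomp)
      have e4 : ¬ v ∈ comp M₁ M₂ a → ¬ v = x := fun hv h => hv (h ▸ hxcomp)
      simp only [Finset.mem_sdiff, Finset.mem_univ, true_and, Finset.mem_singleton,
        Finset.mem_insert, not_or]
      tauto


omit h₁ h₂ in
lemma typeD {b c d : V}
    (h₁ : PM G (Finset.univ \ {a, b, d}) M₁) (h₂ : PM G (Finset.univ \ {c}) M₂)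
    (hab : a ≠ b) (hac : a ≠ c) (had : a ≠ d) (hbc : b ≠ c) (hbd : b ≠ d) (hcd : c ≠ d)
    (hnc : ¬ ∃ (P : G.Walk a c) (Q : G.Walk b d), P.IsPath ∧ Q.IsPath ∧ WalkDisjoint P Q) :
    (PM G (Finset.univ \ {b}) (tog M₁ M₂ a) ∧
        PM G (Finset.univ \ {a, c, d}) (tog M₂ M₁ a)) ∨
    (PM G (Finset.univ \ {d}) (tog M₁ M₂ a) ∧
        PM G (Finset.univ \ {a, b, c}) (tog M₂ M₁ a)) := by
  have hodd : ∀ v, ¬(v ∈ Finset.univ \ ({a, b, d} : Finset V) ↔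
      v ∈ Finset.univ \ ({c} : Finset V)) ↔ (v = a ∨ v = b ∨ v = c ∨ v = d) := by
    intro v
    simp only [Finset.mem_sdiff, Finset.mem_univ, true_and, Finset.mem_singleton,
      Finset.mem_insert, not_or]
    by_cases h1 : v = a <;> by_cases h2 : v = b <;> by_cases h3 : v = c <;>
      by_cases h4 : v = d <;> simp_all
  obtain ⟨x, hx, hxcomp, huniq⟩ := comp_target h₁ h₂ hodd hab hac had hbc hbd hcd hnc
  have hacomp : a ∈ comp M₁ M₂ a := SimpleGraph.Reachable.refl a
  have hcc : comp M₂ M₁ a = comp M₁ M₂ a := comp_comm M₂ M₁ a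
  rcases hx with rfl | rfl
  · -- x = b : result (univ\{a}, univ\{b,c,d})
    have hcn : c ∉ comp M₁ M₂ a := fun h => hbc ((huniq c (Or.inr (Or.inl rfl)) h).symm)
    have hdn : d ∉ comp M₁ M₂ a := fun h => hbd ((huniq d (Or.inr (Or.inr rfl)) h).symm)
    right
    constructor
    · apply tog_PM h₁ h₂
      intro v
      have e1 : v ∈ comp M₁ M₂ a → ¬ v = c := fun hv h => hcn (h ▸ hv)
      have e2 : v ∈ comp M₁ M₂ a → ¬ v = d := fun hv h => hdn (h ▸ hv)
      have e3 : ¬ v ∈ comp M₁ M₂ a → ¬ v = a := fun hv h => hv (h ▸ hacomp)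
      have e4 : ¬ v ∈ comp M₁ M₂ a → ¬ v = x := fun hv h => hv (h ▸ hxcomp)
      simp only [Finset.mem_sdiff, Finset.mem_univ, true_and, Finset.mem_singleton,
        Finset.mem_insert, not_or]
      tauto
    · apply tog_PM h₂ h₁
      rw [hcc]
      intro v
      have e1 : v ∈ comp M₁ M₂ a → ¬ v = c := fun hv h => hcn (h ▸ hv)
      have e2 : v ∈ comp M₁ M₂ a → ¬ v = d := fun hv h => hdn (h ▸ hv)
      have e3 : ¬ v ∈ comp M₁ M₂ a → ¬ v = a := fun hv h => hv (h ▸ hacomp)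
      have e4 : ¬ v ∈ comp M₁ M₂ a → ¬ v = x := fun hv h => hv (h ▸ hxcomp)
      simp only [Finset.mem_sdiff, Finset.mem_univ, true_and, Finset.mem_singleton,
        Finset.mem_insert, not_or]
      tauto
  · -- x = d : result (univ\{a,b,d}, univ\{c})
    have hbn : b ∉ comp M₁ M₂ a := fun h => hbd (huniq b (Or.inl rfl) h)
    have hcn : c ∉ comp M₁ M₂ a := fun h => hcd (huniq c (Or.inr (Or.inl rfl)) h)
    left
    constructor
    · apply tog_PM h₁ h₂
      intro v
      have e1 : v ∈ comp M₁ M₂ a → ¬ v = c := fun hv h => hcn (h ▸ hv)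
      have e2 : v ∈ comp M₁ M₂ a → ¬ v = b := fun hv h => hbn (h ▸ hv)
      have e3 : ¬ v ∈ comp M₁ M₂ a → ¬ v = a := fun hv h => hv (h ▸ hacomp)
      have e4 : ¬ v ∈ comp M₁ M₂ a → ¬ v = x := fun hv h => hv (h ▸ hxcomp)
      simp only [Finset.mem_sdiff, Finset.mem_univ, true_and, Finset.mem_singleton,
        Finset.mem_insert, not_or]
      tauto
    · apply tog_PM h₂ h₁
      rw [hcc]
      intro v
      have e1 : v ∈ comp M₁ M₂ a → ¬ v = c := fun hv h => hcn (h ▸ hv)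
      have e2 : v ∈ comp M₁ M₂ a → ¬ v = b := fun hv h => hbn (h ▸ hv)
      have e3 : ¬ v ∈ comp M₁ M₂ a → ¬ v = a := fun hv h => hv (h ▸ hacomp)
      have e4 : ¬ v ∈ comp M₁ M₂ a → ¬ v = x := fun hv h => hv (h ▸ hxcomp)
      simp only [Finset.mem_sdiff, Finset.mem_univ, true_and, Finset.mem_singleton,
        Finset.mem_insert, not_or]
      tauto


end WithPM

lemma PM_distinct {G : SimpleGraph V} {A B : Finset V} {M : Finset (Sym2 V)}
    (hA : PM G A M) (hB : PM G B M) {y : V} (hy : y ∈ A) (hy' : y ∉ B) : False := by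
  obtain ⟨e, he, hye⟩ := hA.2 y hy
  exact hy' (hB.1.2.1 e he y hye)

lemma Mf_eq (G : SimpleGraph V) (w : Sym2 V → R) (A : Finset V) :
    Mf G w ∅ A = ∑ M ∈ Finset.univ.filter (fun M => PM G A M), ∏ e ∈ M, w e := by
  unfold Mf
  congr 1
  apply Finset.filter_congr
  intro M _
  simp only [PM, Finset.notMem_empty, not_false_iff, true_implies]

lemma pair_sum (G : SimpleGraph V) (w : Sym2 V → R) (A B : Finset V) :
    Mf G w ∅ A * Mf G w ∅ B =
      ∑ p ∈ (Finset.univ.filter (fun M => PM G A M)) ×ˢ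
          (Finset.univ.filter (fun M => PM G B M)),
        (∏ e ∈ p.1, w e) * (∏ e ∈ p.2, w e) := by
  rw [Mf_eq, Mf_eq, Finset.sum_mul_sum, Finset.sum_product]


end KuoAux

/-- The `S = ∅` specialization of the second four-term free-boundary identity: a
(non-bipartite) counterpart of Kuo's condensation theorem for *perfect* matchings.
Here `Mf G w ∅ A` is the total weight of perfect matchings of the induced subgraph on
`A`, i.e. `M(G ∖ (univ \ A))`. -/
theorem kuo_condensation_perfect_odd
    (G : SimpleGraph V) (w : Sym2 V → R) (L : List V) (a b c d : V)
    (hface : FaceConfig G L a b c d) :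
    Mf G w ∅ (Finset.univ \ {b}) * Mf G w ∅ (Finset.univ \ {a, c, d}) +
      Mf G w ∅ (Finset.univ \ {d}) * Mf G w ∅ (Finset.univ \ {a, b, c}) =
    Mf G w ∅ (Finset.univ \ {a}) * Mf G w ∅ (Finset.univ \ {b, c, d}) +
      Mf G w ∅ (Finset.univ \ {a, b, d}) * Mf G w ∅ (Finset.univ \ {c}) := by
  classical
  obtain ⟨L', hrot, i, j, k, l, hij, hjk, hkl, hia, hjb, hkc, hld⟩ := hface.cyclic
  have hnod : L'.Nodup := hrot.nodup_iff.mp hface.nodup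
  have hab : a ≠ b := by
    rw [← hia, ← hjb]; intro h; exact absurd (hnod.get_inj_iff.mp h) (Fin.ne_of_lt hij)
  have hac : a ≠ c := by
    rw [← hia, ← hkc]; intro h
    exact absurd (hnod.get_inj_iff.mp h) (Fin.ne_of_lt (hij.trans hjk))
  have had : a ≠ d := by
    rw [← hia, ← hld]; intro h
    exact absurd (hnod.get_inj_iff.mp h) (Fin.ne_of_lt ((hij.trans hjk).trans hkl))
  have hbc : b ≠ c := by
    rw [← hjb, ← hkc]; intro h; exact absurd (hnod.get_inj_iff.mp h) (Fin.ne_of_lt hjk)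
  have hbd : b ≠ d := by
    rw [← hjb, ← hld]; intro h
    exact absurd (hnod.get_inj_iff.mp h) (Fin.ne_of_lt (hjk.trans hkl))
  have hcd : c ≠ d := by
    rw [← hkc, ← hld]; intro h; exact absurd (hnod.get_inj_iff.mp h) (Fin.ne_of_lt hkl)
  have hnc : ¬ ∃ (P : G.Walk a c) (Q : G.Walk b d),
      P.IsPath ∧ Q.IsPath ∧ WalkDisjoint P Q := by
    have h := hface.noncrossing L' hrot i j k l hij hjk hkl
    rw [hia, hjb, hkc, hld] at h
    exact h
  rw [KuoAux.pair_sum, KuoAux.pair_sum, KuoAux.pair_sum, KuoAux.pair_sum]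
  have hdL : Disjoint
      ((Finset.univ.filter (fun M => KuoAux.PM G (Finset.univ \ {b}) M)) ×ˢ
        (Finset.univ.filter (fun M => KuoAux.PM G (Finset.univ \ {a, c, d}) M)))
      ((Finset.univ.filter (fun M => KuoAux.PM G (Finset.univ \ {d}) M)) ×ˢ
        (Finset.univ.filter (fun M => KuoAux.PM G (Finset.univ \ {a, b, c}) M))) := by
    rw [Finset.disjoint_left]
    rintro p hp hp'
    have h1 := (Finset.mem_filter.mp (Finset.mem_product.mp hp).1).2
    have h2 := (Finset.mem_filter.mp (Finset.mem_product.mp hp').1).2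
    exact KuoAux.PM_distinct h2 h1 (y := b) (by simp [hbd]) (by simp)
  have hdR : Disjoint
      ((Finset.univ.filter (fun M => KuoAux.PM G (Finset.univ \ {a}) M)) ×ˢ
        (Finset.univ.filter (fun M => KuoAux.PM G (Finset.univ \ {b, c, d}) M)))
      ((Finset.univ.filter (fun M => KuoAux.PM G (Finset.univ \ {a, b, d}) M)) ×ˢ
        (Finset.univ.filter (fun M => KuoAux.PM G (Finset.univ \ {c}) M))) := by
    rw [Finset.disjoint_left]
    rintro p hp hp'
    have h1 := (Finset.mem_filter.mp (Finset.mem_product.mp hp).1).2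
    have h2 := (Finset.mem_filter.mp (Finset.mem_product.mp hp').1).2
    exact KuoAux.PM_distinct h1 h2 (y := b) (by simp [hab.symm]) (by simp)
  rw [← Finset.sum_union hdL, ← Finset.sum_union hdR]
  refine Finset.sum_nbij'
    (i := fun p : Finset (Sym2 V) × Finset (Sym2 V) => (KuoAux.tog p.1 p.2 a, KuoAux.tog p.2 p.1 a))
    (j := fun p : Finset (Sym2 V) × Finset (Sym2 V) => (KuoAux.tog p.1 p.2 a, KuoAux.tog p.2 p.1 a))
    ?_ ?_ ?_ ?_ ?_
  · rintro ⟨M₁, M₂⟩ hp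
    rcases Finset.mem_union.mp hp with h | h
    · have h1 := (Finset.mem_filter.mp (Finset.mem_product.mp h).1).2
      have h2 := (Finset.mem_filter.mp (Finset.mem_product.mp h).2).2
      rcases KuoAux.typeA h1 h2 hab hac had hbc hbd hcd hnc with ⟨g1, g2⟩ | ⟨g1, g2⟩
      · exact Finset.mem_union_left _ (Finset.mem_product.mpr
          ⟨Finset.mem_filter.mpr ⟨Finset.mem_univ _, g1⟩,
           Finset.mem_filter.mpr ⟨Finset.mem_univ _, g2⟩⟩)
      · exact Finset.mem_union_right _ (Finset.mem_product.mpr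
          ⟨Finset.mem_filter.mpr ⟨Finset.mem_univ _, g1⟩,
           Finset.mem_filter.mpr ⟨Finset.mem_univ _, g2⟩⟩)
    · have h1 := (Finset.mem_filter.mp (Finset.mem_product.mp h).1).2
      have h2 := (Finset.mem_filter.mp (Finset.mem_product.mp h).2).2
      rcases KuoAux.typeB h1 h2 hab hac had hbc hbd hcd hnc with ⟨g1, g2⟩ | ⟨g1, g2⟩
      · exact Finset.mem_union_left _ (Finset.mem_product.mpr
          ⟨Finset.mem_filter.mpr ⟨Finset.mem_univ _, g1⟩,
           Finset.mem_filter.mpr ⟨Finset.mem_univ _, g2⟩⟩)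
      · exact Finset.mem_union_right _ (Finset.mem_product.mpr
          ⟨Finset.mem_filter.mpr ⟨Finset.mem_univ _, g1⟩,
           Finset.mem_filter.mpr ⟨Finset.mem_univ _, g2⟩⟩)
  · rintro ⟨M₁, M₂⟩ hp
    rcases Finset.mem_union.mp hp with h | h
    · have h1 := (Finset.mem_filter.mp (Finset.mem_product.mp h).1).2
      have h2 := (Finset.mem_filter.mp (Finset.mem_product.mp h).2).2
      rcases KuoAux.typeC h1 h2 hab hac had hbc hbd hcd hnc with ⟨g1, g2⟩ | ⟨g1, g2⟩
      · exact Finset.mem_union_left _ (Finset.mem_product.mpr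
          ⟨Finset.mem_filter.mpr ⟨Finset.mem_univ _, g1⟩,
           Finset.mem_filter.mpr ⟨Finset.mem_univ _, g2⟩⟩)
      · exact Finset.mem_union_right _ (Finset.mem_product.mpr
          ⟨Finset.mem_filter.mpr ⟨Finset.mem_univ _, g1⟩,
           Finset.mem_filter.mpr ⟨Finset.mem_univ _, g2⟩⟩)
    · have h1 := (Finset.mem_filter.mp (Finset.mem_product.mp h).1).2
      have h2 := (Finset.mem_filter.mp (Finset.mem_product.mp h).2).2
      rcases KuoAux.typeD h1 h2 hab hac had hbc hbd hcd hnc with ⟨g1, g2⟩ | ⟨g1, g2⟩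
      · exact Finset.mem_union_left _ (Finset.mem_product.mpr
          ⟨Finset.mem_filter.mpr ⟨Finset.mem_univ _, g1⟩,
           Finset.mem_filter.mpr ⟨Finset.mem_univ _, g2⟩⟩)
      · exact Finset.mem_union_right _ (Finset.mem_product.mpr
          ⟨Finset.mem_filter.mpr ⟨Finset.mem_univ _, g1⟩,
           Finset.mem_filter.mpr ⟨Finset.mem_univ _, g2⟩⟩)
  · rintro ⟨M₁, M₂⟩ _
    simp only [Prod.mk.injEq]
    exact ⟨KuoAux.tog_tog M₁ M₂ a, KuoAux.tog_tog M₂ M₁ a⟩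
  · rintro ⟨M₁, M₂⟩ _
    simp only [Prod.mk.injEq]
    exact ⟨KuoAux.tog_tog M₁ M₂ a, KuoAux.tog_tog M₂ M₁ a⟩
  · rintro ⟨M₁, M₂⟩ _
    exact (KuoAux.tog_weight M₁ M₂ a w).symm
end

section
/- For fixed nonnegative integers k and p, as x → ∞ the product P₂ = ∏_{i=0}^{p-1} (2x+p-2i)_{x-k-1} / (x+k+p-2i)_{x-k-1} satisfies P₂ ∼ 3^{3xp - pk - p/2} / 2^{4xp}, where (a)_m = Γ(a+m)/Γ(a) is the Pochhammer symbol. -/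
open Filter Asymptotics

/-- The Pochhammer symbol (rising factorial) `(a)_m = a(a+1)⋯(a+m-1)`. -/
def pochR (a : ℝ) (m : ℕ) : ℝ := ∏ i ∈ Finset.range m, (a + i)

open Real Topology

lemma pochR_cast (j m : ℕ) :
    (∏ i ∈ Finset.range m, (((j:ℝ)+1) + i)) = ((j+m).factorial : ℝ) / (j.factorial : ℝ) := by
  induction m with
  | zero =>
    simp only [Finset.range_zero, Finset.prod_empty, Nat.add_zero]
    rw [div_self (Nat.cast_ne_zero.2 j.factorial_ne_zero)]
  | succ m ih =>
    rw [Finset.prod_range_succ, ih]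
    have : ((j + (m+1)).factorial : ℝ) = ((j+m).factorial : ℝ) * ((j:ℝ) + 1 + m) := by
      have : j + (m+1) = (j + m) + 1 := by ring
      rw [this, Nat.factorial_succ]; push_cast; ring
    rw [this]
    have h : (j.factorial : ℝ) ≠ 0 := Nat.cast_ne_zero.2 j.factorial_ne_zero
    field_simp

lemma isEquiv_prod {ι : Type*} (s : Finset ι) (f g : ι → ℕ → ℝ)
    (h : ∀ i ∈ s, (f i) ~[atTop] (g i)) :
    (fun x => ∏ i ∈ s, f i x) ~[atTop] (fun x => ∏ i ∈ s, g i x) := by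
  classical
  induction s using Finset.induction with
  | empty => simp; exact IsEquivalent.refl
  | insert a s hi ih =>
    simp only [Finset.prod_insert hi]
    exact (h a (Finset.mem_insert_self a s)).mul
      (ih fun i his => h i (Finset.mem_insert_of_mem his))

lemma comp_tendsto' {u v : ℕ → ℝ} (h : u ~[atTop] v) {k : ℕ → ℕ}
    (hk : Tendsto k atTop atTop) : (fun x => u (k x)) ~[atTop] (fun x => v (k x)) :=
  IsLittleO.comp_tendsto h hk

noncomputable def happ (a : ℕ) (c : ℤ) (x : ℕ) : ℝ :=
  Real.sqrt (2 * (a*x : ℕ) * π) * (((a*x : ℕ) : ℝ) / Real.exp 1) ^ (a*x) *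
    ((a*x : ℕ) : ℝ) ^ c

set_option maxHeartbeats 1000000 in
lemma stirling_lin (a : ℕ) (ha : 0 < a) (c : ℤ) :
    (fun x : ℕ => ((((a*x : ℕ) : ℤ) + c).toNat.factorial : ℝ)) ~[atTop] happ a c := by
  set N : ℕ → ℕ := fun x => (((a*x : ℕ) : ℤ) + c).toNat with hNdef
  have hN : Tendsto N atTop atTop := by
    rw [tendsto_atTop]
    intro b
    filter_upwards [eventually_ge_atTop (b + c.natAbs)] with x hx
    have h1 : x ≤ a*x := Nat.le_mul_of_pos_left x ha
    simp only [hNdef]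
    omega
  have st := comp_tendsto' Stirling.factorial_isEquivalent_stirling hN
  refine st.trans ?_
  -- now: (fun x => √(2*N x*π) * ((N x:ℝ)/exp 1)^(N x)) ~ happ a c
  have hz : ∀ᶠ x : ℕ in atTop, happ a c x ≠ 0 := by
    filter_upwards [eventually_ge_atTop 1] with x hx
    have hax : 0 < (a*x : ℕ) := Nat.mul_pos ha hx
    have hax' : (0:ℝ) < ((a*x : ℕ) : ℝ) := by exact_mod_cast hax
    have h1 : (0:ℝ) < Real.sqrt (2 * (a*x : ℕ) * π) := by
      apply Real.sqrt_pos.2; positivity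
    have h2 : (0:ℝ) < (((a*x : ℕ) : ℝ) / Real.exp 1) ^ (a*x) := by positivity
    have h3 : (0:ℝ) < ((a*x : ℕ) : ℝ) ^ c := by positivity
    unfold happ; positivity
  rw [isEquivalent_iff_tendsto_one hz]
  -- ratio function
  set y : ℕ → ℝ := fun x => ((a*x : ℕ) : ℝ) with hydef
  have hmul : Tendsto (fun x : ℕ => a*x) atTop atTop := by
    rw [tendsto_atTop]
    intro b
    filter_upwards [eventually_ge_atTop b] with x hx'
    have h1 : x ≤ a*x := Nat.le_mul_of_pos_left x ha
    omega
  have hy : Tendsto y atTop atTop := tendsto_natCast_atTop_atTop.comp hmul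
  have h0 : Tendsto (fun x => (c:ℝ) / y x) atTop (𝓝 0) :=
    tendsto_const_nhds.div_atTop hy
  have h1 : Tendsto (fun x => 1 + (c:ℝ) / y x) atTop (𝓝 1) := by
    simpa using tendsto_const_nhds.add h0
  have hsqrt : Tendsto (fun x => Real.sqrt (1 + (c:ℝ)/y x)) atTop (𝓝 1) := by
    have := (Real.continuous_sqrt.tendsto 1).comp h1
    simpa [Function.comp_def] using this
  have hA : Tendsto (fun x => (1 + (c:ℝ)/y x) ^ (y x)) atTop (𝓝 (Real.exp c)) :=
    (tendsto_one_add_div_rpow_exp (c:ℝ)).comp hy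
  have hB : Tendsto (fun x => (1 + (c:ℝ)/y x) ^ ((c:ℤ):ℝ)) atTop (𝓝 1) := by
    have := ((Real.continuousAt_rpow_const 1 ((c:ℤ):ℝ) (Or.inl one_ne_zero)).tendsto).comp h1
    simpa [Function.comp_def] using this
  have hr : Tendsto (fun x => Real.sqrt (1 + (c:ℝ)/y x) *
      ((1 + (c:ℝ)/y x) ^ (y x) * (1 + (c:ℝ)/y x) ^ ((c:ℤ):ℝ)) * Real.exp (-(c:ℝ)))
      atTop (𝓝 1) := by
    have := (hsqrt.mul (hA.mul hB)).mul (tendsto_const_nhds (x := Real.exp (-(c:ℝ))))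
    have he : (1 : ℝ) * (Real.exp c * 1) * Real.exp (-(c:ℝ)) = 1 := by
      rw [one_mul, mul_one, ← Real.exp_add]; simp
    rwa [he] at this
  refine hr.congr' ?_
  filter_upwards [eventually_ge_atTop (c.natAbs + 1)] with x hx
  have hax : 0 < a*x := Nat.mul_pos ha (by omega)
  have hY : (0:ℝ) < y x := by
    simp only [hydef]
    exact_mod_cast hax
  have hNnn : (0:ℤ) ≤ ((a*x : ℕ) : ℤ) + c := by
    have h1 : x ≤ a*x := Nat.le_mul_of_pos_left x ha
    omega
  have hNr : ((N x : ℕ) : ℝ) = y x + c := by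
    simp only [hNdef, hydef]
    have h := Int.toNat_of_nonneg hNnn
    exact_mod_cast congrArg (fun z : ℤ => (z:ℝ)) h
  have hNpos : (0:ℝ) < ((N x : ℕ) : ℝ) := by
    have h1 : x ≤ a*x := Nat.le_mul_of_pos_left x ha
    have : 1 ≤ ((a*x : ℕ) : ℤ) + c := by omega
    have h2 : 1 ≤ N x := by simp only [hNdef]; omega
    exact_mod_cast h2
  have hbase : (1:ℝ) + (c:ℝ)/y x = (y x + c)/y x := by field_simp
  -- rewrite goal
  show Real.sqrt (1 + (c:ℝ)/y x) *
      ((1 + (c:ℝ)/y x) ^ (y x) * (1 + (c:ℝ)/y x) ^ ((c:ℤ):ℝ)) * Real.exp (-(c:ℝ))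
    = (Real.sqrt (2 * (N x) * π) * (((N x):ℝ)/Real.exp 1) ^ (N x)) / happ a c x
  rw [hbase]
  unfold happ
  have e1 : (((N x):ℝ)/Real.exp 1) ^ (N x) = (y x + c) ^ (y x + (c:ℝ)) / Real.exp (y x + c) := by
    rw [← Real.rpow_natCast (((N x):ℝ)/Real.exp 1) (N x), hNr,
      Real.div_rpow (by linarith) (Real.exp_pos 1).le, Real.exp_one_rpow]
  have e2 : (((a*x : ℕ):ℝ)/Real.exp 1) ^ (a*x) = y x ^ (y x) / Real.exp (y x) := by
    rw [← Real.rpow_natCast (((a*x : ℕ):ℝ)/Real.exp 1) (a*x),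
      Real.div_rpow hY.le (Real.exp_pos 1).le, Real.exp_one_rpow]
  have e3 : ((a*x : ℕ) : ℝ) ^ c = y x ^ ((c:ℤ):ℝ) := (Real.rpow_intCast (y x) c).symm
  have e4 : (2 * ((N x):ℝ) * π) = (2 * (y x + c) * π) := by rw [hNr]
  rw [e1, e2, e3, e4]
  have hyc : (0:ℝ) < y x + c := by rw [← hNr]; exact hNpos
  have s1 : Real.sqrt (2 * (y x + c) * π) =
      Real.sqrt ((y x + c)/y x) * Real.sqrt (2 * y x * π) := by
    rw [← Real.sqrt_mul (div_nonneg hyc.le hY.le)]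
    congr 1
    field_simp
  rw [s1]
  rw [Real.sqrt_div hyc.le, Real.div_rpow hyc.le hY.le, Real.div_rpow hyc.le hY.le,
    Real.rpow_add hyc, Real.exp_add, Real.exp_neg]
  have n1 : y x ^ (y x) ≠ 0 := by positivity
  have n2 : y x ^ ((c:ℤ):ℝ) ≠ 0 := by positivity
  have n3 : Real.sqrt (2 * y x * π) ≠ 0 := by
    have : (0:ℝ) < 2 * y x * π := by positivity
    exact (Real.sqrt_pos.2 this).ne'
  have n4 : Real.exp (y x) ≠ 0 := Real.exp_ne_zero _
  have n5 : Real.exp (c:ℝ) ≠ 0 := Real.exp_ne_zero _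
  have hC : Real.sqrt (y x) ≠ 0 := by
    exact (Real.sqrt_pos.2 hY).ne'
  set A := Real.sqrt (y x + c) with hAdef
  set B := Real.sqrt (2 * y x * π) with hBdef
  set C := Real.sqrt (y x) with hCdef
  set E1 := Real.exp (y x) with hE1def
  set E2 := Real.exp (c:ℝ) with hE2def
  set P1 := (y x + (c:ℝ)) ^ (y x) with hP1def
  set P2 := (y x + (c:ℝ)) ^ ((c:ℤ):ℝ) with hP2def
  set Q1 := (y x) ^ (y x) with hQ1def
  set Q2 := (y x) ^ ((c:ℤ):ℝ) with hQ2def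
  field_simp

lemma happ_eval (a : ℕ) (ha : 0 < a) (c : ℤ) {x : ℕ} (hx : 1 ≤ x) :
    happ a c x = Real.sqrt (2*(x:ℝ)*π) * Real.sqrt (a:ℝ) *
      ((a:ℝ)^((a:ℝ)*x + (c:ℝ)) * (x:ℝ)^((a:ℝ)*x + (c:ℝ)) / Real.exp ((a:ℝ)*x)) := by
  have hY : (0:ℝ) < x := by exact_mod_cast hx
  have haR : (0:ℝ) < (a:ℝ) := by exact_mod_cast ha
  unfold happ
  have hcast : ((a*x : ℕ) : ℝ) = (a:ℝ) * x := by push_cast; ring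
  rw [hcast]
  have e1 : ((a:ℝ)*x / Real.exp 1) ^ (a*x) = ((a:ℝ)*x) ^ ((a:ℝ)*x) / Real.exp ((a:ℝ)*x) := by
    rw [← Real.rpow_natCast ((a:ℝ)*x / Real.exp 1) (a*x), hcast,
      Real.div_rpow (by positivity) (Real.exp_pos 1).le, Real.exp_one_rpow]
  have e2 : ((a:ℝ)*x) ^ c = ((a:ℝ)*x) ^ ((c:ℤ):ℝ) := (Real.rpow_intCast _ c).symm
  rw [e1, e2, Real.mul_rpow haR.le hY.le, Real.mul_rpow haR.le hY.le]
  have s1 : Real.sqrt (2 * ((a:ℝ)*x) * π) = Real.sqrt (a:ℝ) * Real.sqrt (2*(x:ℝ)*π) := by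
    rw [← Real.sqrt_mul (Nat.cast_nonneg a)]
    congr 1
    ring
  rw [s1, Real.rpow_add haR ((a:ℝ)*x) ((c:ℤ):ℝ), Real.rpow_add hY ((a:ℝ)*x) ((c:ℤ):ℝ)]
  ring

lemma group4 (S u1 u2 u3 u4 p1 p2 p3 p4 q1 q2 q3 q4 e1 e2 e3 e4 : ℝ)
    (hS : S ≠ 0) (hu1 : u1 ≠ 0) (hu2 : u2 ≠ 0) (hu3 : u3 ≠ 0) (hu4 : u4 ≠ 0)
    (hp1 : p1 ≠ 0) (hp2 : p2 ≠ 0) (hp3 : p3 ≠ 0) (hp4 : p4 ≠ 0)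
    (hq3 : q3 ≠ 0) (hq4 : q4 ≠ 0)
    (he1 : e1 ≠ 0) (he2 : e2 ≠ 0) (he3 : e3 ≠ 0) (he4 : e4 ≠ 0)
    (hq : q1 * q2 = q3 * q4) (hee : e1 * e2 = e3 * e4) :
    (S * u1 * (p1 * q1 / e1)) * (S * u2 * (p2 * q2 / e2)) /
      ((S * u3 * (p3 * q3 / e3)) * (S * u4 * (p4 * q4 / e4)))
    = (u1 * u2 / (u3 * u4)) * (p1 * p2 / (p3 * p4)) := by
  have hX : S^2 * (q3*q4) / (e3*e4) ≠ 0 :=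
    div_ne_zero (mul_ne_zero (pow_ne_zero 2 hS) (mul_ne_zero hq3 hq4))
      (mul_ne_zero he3 he4)
  have L : (S * u1 * (p1 * q1 / e1)) * (S * u2 * (p2 * q2 / e2))
      = (u1 * u2 * (p1 * p2)) * (S^2 * (q3*q4) / (e3*e4)) := by
    rw [← hq, ← hee]
    field_simp
  have D : (S * u3 * (p3 * q3 / e3)) * (S * u4 * (p4 * q4 / e4))
      = (u3 * u4 * (p3 * p4)) * (S^2 * (q3*q4) / (e3*e4)) := by
    field_simp
  rw [L, D, mul_div_mul_right _ _ hX]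
  field_simp

lemma happ_ratio (c₁ c₂ c₃ c₄ : ℤ) (h : c₁ + c₂ = c₃ + c₄) {x : ℕ} (hx : 1 ≤ x) :
    happ 3 c₁ x * happ 1 c₂ x / (happ 2 c₃ x * happ 2 c₄ x)
      = (3:ℝ) ^ (3*(x:ℝ) + c₁ + 1/2) / (2:ℝ) ^ (4*(x:ℝ) + c₃ + c₄ + 1) := by
  have hY : (0:ℝ) < x := by exact_mod_cast hx
  set S := Real.sqrt (2*(x:ℝ)*π) with hS
  have hSpos : 0 < S := Real.sqrt_pos.2 (by positivity)
  have E1 : happ 3 c₁ x = S * Real.sqrt 3 *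
      ((3:ℝ)^(3*(x:ℝ)+(c₁:ℝ)) * (x:ℝ)^(3*(x:ℝ)+(c₁:ℝ)) / Real.exp (3*(x:ℝ))) := by
    have := happ_eval 3 (by norm_num) c₁ hx
    rw [this, hS]; push_cast; ring_nf
  have E2 : happ 1 c₂ x = S * Real.sqrt 1 *
      ((1:ℝ)^(1*(x:ℝ)+(c₂:ℝ)) * (x:ℝ)^(1*(x:ℝ)+(c₂:ℝ)) / Real.exp (1*(x:ℝ))) := by
    have := happ_eval 1 (by norm_num) c₂ hx
    rw [this, hS]; push_cast; ring_nf
  have E3 : happ 2 c₃ x = S * Real.sqrt 2 *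
      ((2:ℝ)^(2*(x:ℝ)+(c₃:ℝ)) * (x:ℝ)^(2*(x:ℝ)+(c₃:ℝ)) / Real.exp (2*(x:ℝ))) := by
    have := happ_eval 2 (by norm_num) c₃ hx
    rw [this, hS]; push_cast; ring_nf
  have E4 : happ 2 c₄ x = S * Real.sqrt 2 *
      ((2:ℝ)^(2*(x:ℝ)+(c₄:ℝ)) * (x:ℝ)^(2*(x:ℝ)+(c₄:ℝ)) / Real.exp (2*(x:ℝ))) := by
    have := happ_eval 2 (by norm_num) c₄ hx
    rw [this, hS]; push_cast; ring_nf
  rw [E1, E2, E3, E4]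
  have hq : (x:ℝ)^(3*(x:ℝ)+(c₁:ℝ)) * (x:ℝ)^(1*(x:ℝ)+(c₂:ℝ))
      = (x:ℝ)^(2*(x:ℝ)+(c₃:ℝ)) * (x:ℝ)^(2*(x:ℝ)+(c₄:ℝ)) := by
    rw [← Real.rpow_add hY, ← Real.rpow_add hY]
    congr 1
    have h' : (c₁:ℝ) + c₂ = c₃ + c₄ := by exact_mod_cast congrArg (fun z : ℤ => (z:ℝ)) h
    linarith
  have hee : Real.exp (3*(x:ℝ)) * Real.exp (1*(x:ℝ))
      = Real.exp (2*(x:ℝ)) * Real.exp (2*(x:ℝ)) := by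
    rw [← Real.exp_add, ← Real.exp_add]
    ring_nf
  rw [group4 S (Real.sqrt 3) (Real.sqrt 1) (Real.sqrt 2) (Real.sqrt 2) _ _ _ _ _ _ _ _ _ _ _ _
    hSpos.ne' (by positivity) (by positivity) (by positivity) (by positivity)
    (Real.rpow_pos_of_pos (by norm_num) _).ne' (Real.rpow_pos_of_pos (by norm_num) _).ne'
    (Real.rpow_pos_of_pos (by norm_num) _).ne' (Real.rpow_pos_of_pos (by norm_num) _).ne'
    (Real.rpow_pos_of_pos hY _).ne' (Real.rpow_pos_of_pos hY _).ne'
    (Real.exp_ne_zero _) (Real.exp_ne_zero _) (Real.exp_ne_zero _) (Real.exp_ne_zero _)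
    hq hee]
  rw [Real.sqrt_one, mul_one, Real.one_rpow, mul_one, Real.mul_self_sqrt (by norm_num : (0:ℝ) ≤ 2)]
  have h3 : (3:ℝ) ^ (3*(x:ℝ) + (c₁:ℝ) + 1/2) = (3:ℝ) ^ (3*(x:ℝ) + (c₁:ℝ)) * Real.sqrt 3 := by
    rw [Real.rpow_add (by norm_num : (0:ℝ) < 3), Real.sqrt_eq_rpow]
  have h2 : (2:ℝ) ^ (4*(x:ℝ) + (c₃:ℝ) + (c₄:ℝ) + 1) =
      (2:ℝ) ^ (2*(x:ℝ) + (c₃:ℝ)) * (2:ℝ) ^ (2*(x:ℝ) + (c₄:ℝ)) * 2 := by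
    have harith : 4*(x:ℝ) + (c₃:ℝ) + (c₄:ℝ) + 1
        = (2*(x:ℝ) + (c₃:ℝ)) + ((2*(x:ℝ) + (c₄:ℝ)) + 1) := by ring
    rw [harith, Real.rpow_add (by norm_num : (0:ℝ) < 2) (2*(x:ℝ) + (c₃:ℝ)) ((2*(x:ℝ) + (c₄:ℝ)) + 1),
      Real.rpow_add (by norm_num : (0:ℝ) < 2) (2*(x:ℝ) + (c₄:ℝ)) 1, Real.rpow_one]
    ring
  rw [h3, h2]
  have n1 : (0:ℝ) < (2:ℝ) ^ (2*(x:ℝ) + (c₃:ℝ)) := Real.rpow_pos_of_pos (by norm_num) _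
  have n2 : (0:ℝ) < (2:ℝ) ^ (2*(x:ℝ) + (c₄:ℝ)) := Real.rpow_pos_of_pos (by norm_num) _
  field_simp

lemma pochR_eq (j m : ℕ) : pochR ((j:ℝ)+1) m = ((j+m).factorial : ℝ) / (j.factorial : ℝ) := by
  unfold pochR
  exact pochR_cast j m

lemma factor_equiv (k p i : ℕ) (hi : i < p) :
    (fun x : ℕ => pochR (2 * (x : ℝ) + p - 2 * i) (x - k - 1) /
        pochR ((x : ℝ) + k + p - 2 * i) (x - k - 1)) ~[atTop]
    (fun x : ℕ => (3:ℝ) ^ (3*(x:ℝ) + ((p:ℤ) - 2*i - k - 2 : ℤ) + 1/2) /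
        (2:ℝ) ^ (4*(x:ℝ) + ((p:ℤ) - 2*i - 1 : ℤ) + ((p:ℤ) - 2*i - 2 : ℤ) + 1)) := by
  set c₁ : ℤ := (p:ℤ) - 2*i - k - 2 with hc₁
  set c₂ : ℤ := (k:ℤ) + p - 2*i - 1 with hc₂
  set c₃ : ℤ := (p:ℤ) - 2*i - 1 with hc₃
  set c₄ : ℤ := (p:ℤ) - 2*i - 2 with hc₄
  have hsum : c₁ + c₂ = c₃ + c₄ := by omega
  have h4 := ((stirling_lin 3 (by norm_num) c₁).mul (stirling_lin 1 (by norm_num) c₂)).div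
    ((stirling_lin 2 (by norm_num) c₃).mul (stirling_lin 2 (by norm_num) c₄))
  have eq1 : (fun x : ℕ => (((((3*x : ℕ) : ℤ) + c₁).toNat.factorial : ℝ) *
        ((((1*x : ℕ) : ℤ) + c₂).toNat.factorial : ℝ)) /
        (((((2*x : ℕ) : ℤ) + c₃).toNat.factorial : ℝ) *
        ((((2*x : ℕ) : ℤ) + c₄).toNat.factorial : ℝ)))
      =ᶠ[atTop] (fun x : ℕ => pochR (2 * (x : ℝ) + p - 2 * i) (x - k - 1) /
        pochR ((x : ℝ) + k + p - 2 * i) (x - k - 1)) := by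
    filter_upwards [eventually_ge_atTop (k + 2*p + 2)] with x hx
    set m := x - k - 1 with hm
    set j₁ := 2*x + p - 2*i - 1 with hj₁
    set j₂ := x + k + p - 2*i - 1 with hj₂
    have hb1 : 2 * (x : ℝ) + p - 2 * i = ((j₁:ℕ):ℝ) + 1 := by
      have hj : j₁ + 2*i + 1 = 2*x + p := by omega
      have := congrArg (fun n : ℕ => (n:ℝ)) hj
      push_cast at this
      linarith
    have hb2 : (x : ℝ) + k + p - 2 * i = ((j₂:ℕ):ℝ) + 1 := by
      have hj : j₂ + 2*i + 1 = x + k + p := by omega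
      have := congrArg (fun n : ℕ => (n:ℝ)) hj
      push_cast at this
      linarith
    rw [hb1, hb2, pochR_eq, pochR_eq]
    have hA : (((3*x : ℕ) : ℤ) + c₁).toNat = j₁ + m := by omega
    have hB : (((1*x : ℕ) : ℤ) + c₂).toNat = j₂ := by omega
    have hC : (((2*x : ℕ) : ℤ) + c₃).toNat = j₁ := by omega
    have hD : (((2*x : ℕ) : ℤ) + c₄).toNat = j₂ + m := by omega
    rw [hA, hB, hC, hD]
    have n1 : (j₁.factorial : ℝ) ≠ 0 := Nat.cast_ne_zero.2 j₁.factorial_ne_zero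
    have n2 : (j₂.factorial : ℝ) ≠ 0 := Nat.cast_ne_zero.2 j₂.factorial_ne_zero
    have n3 : ((j₂+m).factorial : ℝ) ≠ 0 := Nat.cast_ne_zero.2 (j₂+m).factorial_ne_zero
    field_simp
  have eq2 : (fun x : ℕ => happ 3 c₁ x * happ 1 c₂ x / (happ 2 c₃ x * happ 2 c₄ x))
      =ᶠ[atTop] (fun x : ℕ => (3:ℝ) ^ (3*(x:ℝ) + (c₁:ℝ) + 1/2) /
        (2:ℝ) ^ (4*(x:ℝ) + (c₃:ℝ) + (c₄:ℝ) + 1)) := by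
    filter_upwards [eventually_ge_atTop 1] with x hx
    exact happ_ratio c₁ c₂ c₃ c₄ hsum hx
  exact (h4.congr_left eq1).congr_right eq2

/-- For fixed `k, p ≥ 0`, as `x → ∞`,
`P₂ = ∏_{i=0}^{p-1} (2x+p-2i)_{x-k-1}/(x+k+p-2i)_{x-k-1} ∼ 3^{3xp-pk-p/2}/2^{4xp}`. -/
theorem P2_asymptotics (k p : ℕ) :
    (fun x : ℕ => ∏ i ∈ Finset.range p,
        pochR (2 * (x : ℝ) + p - 2 * i) (x - k - 1) /
          pochR ((x : ℝ) + k + p - 2 * i) (x - k - 1)) ~[atTop]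
    (fun x : ℕ =>
      (3 : ℝ) ^ (3 * (x : ℝ) * p - (p : ℝ) * k - (p : ℝ) / 2) /
        (2 : ℝ) ^ (4 * (x : ℝ) * p)) := by
  have hprod := isEquiv_prod (Finset.range p)
    (fun i x => pochR (2 * (x : ℝ) + p - 2 * i) (x - k - 1) /
      pochR ((x : ℝ) + k + p - 2 * i) (x - k - 1))
    (fun i x => (3:ℝ) ^ (3*(x:ℝ) + (((p:ℤ) - 2*i - k - 2 : ℤ):ℝ) + 1/2) /
      (2:ℝ) ^ (4*(x:ℝ) + (((p:ℤ) - 2*i - 1 : ℤ):ℝ) + (((p:ℤ) - 2*i - 2 : ℤ):ℝ) + 1))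
    (fun i hi => factor_equiv k p i (Finset.mem_range.1 hi))
  refine hprod.congr_right ?_
  have hgaussN : (∑ i ∈ Finset.range p, i) * 2 + p = p * p := by
    cases p with
    | zero => simp
    | succ n =>
      rw [Finset.sum_range_id_mul_two]
      simp [Nat.succ_sub_one]
      ring
  have hS : ((∑ i ∈ Finset.range p, i : ℕ) : ℝ) * 2 + p = p * p := by
    exact_mod_cast congrArg (fun n : ℕ => (n:ℝ)) hgaussN
  have hScast : (∑ i ∈ Finset.range p, (i:ℝ)) = ((∑ i ∈ Finset.range p, i : ℕ) : ℝ) := by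
    exact (Nat.cast_sum (Finset.range p) (fun i => i)).symm
  filter_upwards [] with x
  rw [Finset.prod_div_distrib,
    ← Real.rpow_sum_of_pos (by norm_num : (0:ℝ) < 3),
    ← Real.rpow_sum_of_pos (by norm_num : (0:ℝ) < 2)]
  congr 1
  · congr 1
    have e1 : ∀ i ∈ Finset.range p, (3*(x:ℝ) + (((p:ℤ) - 2*i - k - 2 : ℤ):ℝ) + 1/2)
        = (3*(x:ℝ) + (p:ℝ) - (k:ℝ) - 3/2) - 2*(i:ℝ) := by
      intro i _
      push_cast
      ring
    rw [Finset.sum_congr rfl e1, Finset.sum_sub_distrib, Finset.sum_const,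
      ← Finset.mul_sum, hScast, Finset.card_range, nsmul_eq_mul]
    linear_combination (-1 : ℝ) * hS
  · congr 1
    have e2 : ∀ i ∈ Finset.range p, (4*(x:ℝ) + (((p:ℤ) - 2*i - 1 : ℤ):ℝ)
        + (((p:ℤ) - 2*i - 2 : ℤ):ℝ) + 1) = (4*(x:ℝ) + 2*(p:ℝ) - 2) - 4*(i:ℝ) := by
      intro i _
      push_cast
      ring
    rw [Finset.sum_congr rfl e2, Finset.sum_sub_distrib, Finset.sum_const,
      ← Finset.mul_sum, hScast, Finset.card_range, nsmul_eq_mul]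
    linear_combination (-2 : ℝ) * hS
end

section
/- For fixed nonnegative integer k, as x → ∞ the double product P₃ = ∏_{i=1}^{x-k-1} ∏_{j=2}^{i} (2k+i+j-1)/(i+j-1) satisfies P₃ ∼ Γ(3)Γ(5)⋯Γ(2k+1) · 2^{2kx - k(k+2)} · π^{-k/2} · x^{-k(k+3/2)}. -/
open Filter Asymptotics Finset Nat Topology


private lemma factpos (a : ℕ) : (0:ℝ) < (a ! : ℝ) := by exact_mod_cast a.factorial_pos

private lemma prodM (a t : ℕ) : ∏ m ∈ Icc 1 t, ((a:ℝ) + m) = (a+t)! / a ! := by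
  induction t with
  | zero => simp [div_self (factpos a).ne']
  | succ t ih =>
    rw [← Finset.Ico_add_one_right_eq_Icc] at *
    rw [Finset.prod_Ico_succ_top (by omega), ih,
      show (a + (t+1))! = (a+t)! * (a+t+1) by
        rw [show a+(t+1) = (a+t)+1 by omega, Nat.factorial_succ]; ring,
      div_mul_eq_mul_div]
    congr 1
    push_cast
    ring

private lemma prodN (a i : ℕ) (hi : 1 ≤ i) : ∏ j ∈ Icc 2 i, ((a:ℝ) + j) = (a+i)! / (a+1)! := by
  induction i with
  | zero => omega
  | succ i ih =>
    rcases Nat.eq_or_lt_of_le hi with h | h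
    · simp [← h, div_self (factpos (a+1)).ne']
    · have hi1 : 1 ≤ i := by omega
      rw [← Finset.Ico_add_one_right_eq_Icc] at *
      rw [Finset.prod_Ico_succ_top (by omega), ih hi1,
        show (a + (i+1))! = (a+i)! * (a+i+1) by
          rw [show a+(i+1) = (a+i)+1 by omega, Nat.factorial_succ]; ring,
        div_mul_eq_mul_div]
      congr 1
      push_cast
      ring


private lemma inner_eq (k i : ℕ) (hi : 1 ≤ i) :
    ∏ j ∈ Icc 2 i, (2*(k:ℝ)+i+j-1)/((i:ℝ)+j-1)
      = ((2*k+2*i-1)! * i !) / ((2*k+i)! * (2*i-1)!) := by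
  have h1 : ∀ j ∈ Icc 2 i, (2*(k:ℝ)+i+j-1)/((i:ℝ)+j-1)
      = (((2*k+i-1 : ℕ):ℝ) + j) / (((i-1 : ℕ):ℝ) + j) := by
    intro j hj
    have h2 : ((2*k+i-1 : ℕ):ℝ) = 2*(k:ℝ)+i-1 := by
      have : (1:ℕ) ≤ 2*k+i := by omega
      push_cast [Nat.cast_sub this]
      ring
    have h3 : ((i-1 : ℕ):ℝ) = (i:ℝ)-1 := by
      push_cast [Nat.cast_sub hi]
      ring
    rw [h2, h3]
    ring_nf
  rw [Finset.prod_congr rfl h1, Finset.prod_div_distrib, prodN _ _ hi, prodN _ _ hi,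
    show 2*k+i-1+i = 2*k+2*i-1 by omega, show 2*k+i-1+1 = 2*k+i by omega,
    show i-1+i = 2*i-1 by omega, show i-1+1 = i by omega]
  rw [div_div_div_eq]


private lemma outer_eq (k n : ℕ) :
    ∏ i ∈ Icc 1 n, (((2*k+2*i-1)! * i !) / ((2*k+i)! * (2*i-1)!) : ℝ)
      = ((n ! : ℝ) * k ! / (n+k)!) * (∏ m ∈ Icc 1 (2*k), (m ! : ℝ)/(n+m)!)
        * ∏ i ∈ Icc 1 n, ((2*(k+i))! : ℝ)/(2*i)! := by
  induction n with
  | zero =>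
    simp [div_self (factpos k).ne', div_self (factpos _).ne']
  | succ n ih =>
    have hB : ∏ m ∈ Icc 1 (2*k), ((m ! : ℝ)/(n+1+m)!)
        = (∏ m ∈ Icc 1 (2*k), ((m ! : ℝ)/(n+m)!)) / ((((n+1)+2*k)! : ℝ) / (n+1)!) := by
      rw [← prodM (n+1) (2*k), ← Finset.prod_div_distrib]
      refine Finset.prod_congr rfl fun m hm => ?_
      rw [show n+1+m = (n+m)+1 by omega, Nat.factorial_succ]
      have h1 := factpos (n+m)
      rw [div_div]
      congr 1
      push_cast
      ring
    rw [Finset.prod_Icc_succ_top (by omega), Finset.prod_Icc_succ_top (by omega), ih, hB]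
    rw [show 2*k+2*(n+1)-1 = 2*k+2*n+1 by omega,
        show 2*(n+1)-1 = 2*n+1 by omega,
        show 2*k+(n+1) = (n+1)+2*k by omega,
        show (2*(k+(n+1)))! = (2*(k+n+1)) * ((2*k+2*n+1)!) by
          rw [show 2*(k+(n+1)) = (2*k+2*n+1)+1 by omega, Nat.factorial_succ,
            show 2*k+2*n+1+1 = 2*(k+n+1) by omega],
        show ((2*(n+1)))! = (2*(n+1)) * ((2*n+1)!) by
          rw [show 2*(n+1) = (2*n+1)+1 by omega, Nat.factorial_succ,
            show 2*n+1+1 = 2*(n+1) by omega],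
        show ((n+1)+k)! = ((n+k)+1)! by congr 1; omega,
        Nat.factorial_succ ((n+k)),
        Nat.factorial_succ n]
    have h1 := factpos (n+k)
    have h2 := factpos ((n+1)+2*k)
    have h3 := factpos (2*n+1)
    have h4 := factpos n
    have h5 := factpos (n+1)
    have h6 : (0:ℝ) < ((n:ℝ)+k+1) := by positivity
    push_cast
    field_simp
    ring


private lemma swap_aux (k n : ℕ) :
    (∏ i ∈ Icc 1 n, ((2*(k+i))! : ℝ)) * ∏ i ∈ Icc 1 k, ((2*i)! : ℝ)
      = ∏ i ∈ Icc 1 (n+k), ((2*i)! : ℝ) := by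
  have h1 : ∏ i ∈ Icc 1 n, ((2*(k+i))! : ℝ) = ∏ i ∈ Icc (k+1) (k+n), ((2*i)! : ℝ) := by
    rw [show Icc (k+1) (k+n) = (Icc 1 n).map (addLeftEmbedding k) from Finset.map_add_left_Icc 1 n k |>.symm, Finset.prod_map]
    rfl
  rw [h1, show Icc 1 k = Ioc 0 k from Finset.Icc_add_one_left_eq_Ioc 0 k, show Icc (k+1) (k+n) = Ioc k (k+n) from Finset.Icc_add_one_left_eq_Ioc k (k+n), show Icc 1 (n+k) = Ioc 0 (n+k) from Finset.Icc_add_one_left_eq_Ioc 0 (n+k)]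
  rw [mul_comm, show n+k = k+n by omega]
  exact Finset.prod_Ioc_consecutive _ (by omega) (by omega)

private lemma swap_eq (k n : ℕ) :
    ∏ i ∈ Icc 1 n, ((2*(k+i))! : ℝ)/(2*i)! = ∏ i ∈ Icc 1 k, ((2*(n+i))! : ℝ)/(2*i)! := by
  have hk : (0:ℝ) < ∏ i ∈ Icc 1 k, ((2*i)! : ℝ) := Finset.prod_pos fun i _ => factpos _
  have hn : (0:ℝ) < ∏ i ∈ Icc 1 n, ((2*i)! : ℝ) := Finset.prod_pos fun i _ => factpos _
  rw [Finset.prod_div_distrib, Finset.prod_div_distrib]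
  rw [div_eq_div_iff hn.ne' hk.ne']
  rw [swap_aux, swap_aux, show n+k = k+n by omega]


private lemma ratio_tendsto (m : ℕ) :
    Tendsto (fun n:ℕ => ((n+m)! :ℝ)/((n ! :ℝ) * (n:ℝ)^m)) atTop (𝓝 1) := by
  induction m with
  | zero =>
    have : ∀ n : ℕ, ((n+0)! :ℝ)/((n ! :ℝ) * (n:ℝ)^0) = 1 := by
      intro n; simp [div_self (factpos n).ne']
    exact Tendsto.congr (fun n => (this n).symm) tendsto_const_nhds
  | succ m ih =>
    have hg : Tendsto (fun n:ℕ => 1 + ((m:ℝ)+1) * (1/(n:ℝ))) atTop (𝓝 1) := by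
      have := tendsto_one_div_atTop_nhds_zero_nat.const_mul ((m:ℝ)+1)
      simpa using tendsto_const_nhds.add this
    have := ih.mul hg
    rw [mul_one] at this
    refine this.congr' ?_
    filter_upwards [eventually_ge_atTop 1] with n hn
    have hn0 : (0:ℝ) < (n:ℝ) := by exact_mod_cast hn
    rw [show n+(m+1) = (n+m)+1 by omega, Nat.factorial_succ]
    have h1 := factpos (n+m)
    have h2 := factpos n
    push_cast
    field_simp
    ring

private lemma cb_tendsto :
    Tendsto (fun n:ℕ => ((2*n)! :ℝ) * Real.sqrt (Real.pi * n) / (((n ! :ℝ))^2 * 4^n))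
      atTop (𝓝 1) := by
  have hπ : Real.sqrt Real.pi ≠ 0 := by positivity
  have h2 : Tendsto (fun n:ℕ => Stirling.stirlingSeq (2*n)) atTop (𝓝 (Real.sqrt Real.pi)) :=
    Stirling.tendsto_stirlingSeq_sqrt_pi.comp
      (tendsto_id.const_mul_atTop' two_pos)
  have t : Tendsto (fun n:ℕ => Real.sqrt Real.pi * Stirling.stirlingSeq (2*n)
      / (Stirling.stirlingSeq n)^2) atTop
      (𝓝 (Real.sqrt Real.pi * Real.sqrt Real.pi / (Real.sqrt Real.pi)^2)) := by
    exact (tendsto_const_nhds.mul h2).div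
      ((Stirling.tendsto_stirlingSeq_sqrt_pi).pow 2) (by positivity)
  have hval : Real.sqrt Real.pi * Real.sqrt Real.pi / (Real.sqrt Real.pi)^2 = 1 := by
    rw [← sq]; exact div_self (by positivity)
  rw [hval] at t
  refine t.congr' ?_
  filter_upwards [eventually_ge_atTop 1] with n hn
  have hn0 : (0:ℝ) < (n:ℝ) := by exact_mod_cast hn
  have he : (0:ℝ) < Real.exp 1 := Real.exp_pos 1
  have hfn := factpos n
  have hf2n := factpos (2*n)
  simp only [Stirling.stirlingSeq]
  push_cast
  rw [show (2:ℝ)*(2*(n:ℝ)) = 4*(n:ℝ) by ring,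
      show Real.sqrt (4*(n:ℝ)) = 2 * Real.sqrt n by
        rw [Real.sqrt_mul (by norm_num), show Real.sqrt 4 = 2 by
          rw [show (4:ℝ) = 2^2 by norm_num, Real.sqrt_sq (by norm_num)]],
      show (2*(n:ℝ))/Real.exp 1 = 2*((n:ℝ)/Real.exp 1) by ring,
      mul_pow, pow_mul, show ((2:ℝ))^2 = 4 by norm_num,
      Real.sqrt_mul (le_of_lt Real.pi_pos)]
  have hsq2n : Real.sqrt (2*(n:ℝ)) ^ 2 = 2*(n:ℝ) := Real.sq_sqrt (by positivity)
  have hsqn : Real.sqrt (n:ℝ) * Real.sqrt (n:ℝ) = (n:ℝ) := Real.mul_self_sqrt (by positivity)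
  have hne : ((n:ℝ)/Real.exp 1)^n ≠ 0 := pow_ne_zero _ (by positivity)
  have h4 : (4:ℝ)^n ≠ 0 := by positivity
  have hsqn' : Real.sqrt (n:ℝ) ≠ 0 := by positivity
  have hsq2n' : Real.sqrt (2*(n:ℝ)) ≠ 0 := by positivity
  field_simp
  rw [hsq2n, Real.sq_sqrt hn0.le, pow_mul']

private lemma sum2 (t : ℕ) : 2 * ∑ m ∈ Icc 1 t, m = t*(t+1) := by
  induction t with
  | zero => simp
  | succ t ih =>
    rw [Finset.sum_Icc_succ_top (by omega), Nat.mul_add, ih]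
    ring

private lemma factidR (k : ℕ) :
    ((k ! : ℝ)) * (∏ m ∈ Icc 1 (2*k), (m ! : ℝ)) * 2^k
      = (∏ i ∈ Icc 1 k, ((2*i)! : ℝ))^2 := by
  induction k with
  | zero => simp
  | succ k ih =>
    rw [show 2*(k+1) = (2*k+1)+1 by ring, Finset.prod_Icc_succ_top (by omega),
      Finset.prod_Icc_succ_top (by omega), Finset.prod_Icc_succ_top (by omega),
      Nat.factorial_succ,
      show ((2*k+1)+1) = 2*(k+1) by ring,
      show ((2*(k+1))! : ℕ) = (2*(k+1)) * ((2*k+1)!) by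
        rw [show 2*(k+1) = (2*k+1)+1 by ring, Nat.factorial_succ]]
    push_cast
    linear_combination (((2:ℝ)*k+1+1) * ((2*k+1)! : ℝ))^2 * ih

noncomputable def pphi (k : ℕ) : ℕ → ℝ := fun n =>
  ((n:ℝ)^k * n ! / ((n+k)! : ℕ)) *
  (∏ m ∈ Icc 1 (2*k), ((n:ℝ)^m * n ! / ((n+m)! : ℕ))) *
  (∏ i ∈ Icc 1 k, (((2*(n+i))! : ℕ) : ℝ) / ((((2*n)! : ℕ):ℝ) * (2*(n:ℝ))^(2*i))) *
  (((2*n)! : ℝ) * Real.sqrt (Real.pi * n) / ((n ! :ℝ)^2 * 4^n))^k *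
  ((((n:ℝ)+k+1)/n) ^ ((k:ℝ)*((k:ℝ)+3/2)))

noncomputable def gg (k : ℕ) : ℕ → ℝ := fun n =>
  (∏ i ∈ Icc 1 k, ((2*i)! : ℝ)) * 2^(2*(k:ℝ)*((n:ℝ)+k+1) - (k:ℝ)*((k:ℝ)+2)) / Real.pi^((k:ℝ)/2)
    * ((n:ℝ)+k+1)^(-((k:ℝ)*((k:ℝ)+3/2)))

private lemma pphi_tendsto (k : ℕ) : Tendsto (pphi k) atTop (𝓝 1) := by
  have hbase : ∀ m : ℕ, Tendsto (fun n : ℕ => (n:ℝ)^m * n ! / ((n+m)! : ℕ)) atTop (𝓝 1) := by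
    intro m
    have := (ratio_tendsto m).inv₀ one_ne_zero
    rw [inv_one] at this
    refine this.congr fun n => ?_
    rw [inv_div, mul_comm ((n ! : ℝ)) _]
  have t1 := hbase k
  have t2 : Tendsto (fun n : ℕ => ∏ m ∈ Icc 1 (2*k), ((n:ℝ)^m * n ! / ((n+m)! : ℕ)))
      atTop (𝓝 1) := by
    have := tendsto_finset_prod (f := fun m (n : ℕ) => ((n:ℝ)^m * n ! / ((n+m)! : ℕ)))
      (a := fun _ => (1:ℝ)) (Icc 1 (2*k)) (fun i _ => hbase i)
    simpa using this
  have t3 : Tendsto (fun n : ℕ =>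
      ∏ i ∈ Icc 1 k, ((((2*(n+i))! : ℕ) : ℝ) / ((((2*n)! : ℕ):ℝ) * (2*(n:ℝ))^(2*i))))
      atTop (𝓝 1) := by
    have h3 : ∀ i : ℕ, Tendsto (fun n : ℕ =>
        (((2*(n+i))! : ℕ) : ℝ) / ((((2*n)! : ℕ):ℝ) * (2*(n:ℝ))^(2*i))) atTop (𝓝 1) := by
      intro i
      have hcomp : Tendsto (fun n : ℕ => 2*n) atTop atTop :=
        tendsto_id.const_mul_atTop' two_pos
      have := (ratio_tendsto (2*i)).comp hcomp
      refine this.congr fun n => ?_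
      simp only [Function.comp]
      congr 2
      · congr 1
        omega
      · push_cast
        ring
    have := tendsto_finset_prod (f := fun i (n : ℕ) =>
        (((2*(n+i))! : ℕ) : ℝ) / ((((2*n)! : ℕ):ℝ) * (2*(n:ℝ))^(2*i)))
      (a := fun _ => (1:ℝ)) (Icc 1 k) (fun i _ => h3 i)
    simpa using this
  have t4 : Tendsto (fun n : ℕ =>
      (((2*n)! : ℝ) * Real.sqrt (Real.pi * n) / ((n ! :ℝ)^2 * 4^n))^k) atTop (𝓝 1) := by
    have := cb_tendsto.pow k
    simpa using this
  have t5 : Tendsto (fun n : ℕ => (((n:ℝ)+k+1)/n) ^ ((k:ℝ)*((k:ℝ)+3/2))) atTop (𝓝 1) := by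
    have hb : Tendsto (fun n : ℕ => ((n:ℝ)+k+1)/n) atTop (𝓝 1) := by
      have := tendsto_one_div_atTop_nhds_zero_nat.const_mul ((k:ℝ)+1)
      have h2 := (tendsto_const_nhds : Tendsto (fun _ : ℕ => (1:ℝ)) atTop (𝓝 1)).add this
      rw [mul_zero, add_zero] at h2
      refine h2.congr' ?_
      filter_upwards [eventually_ge_atTop 1] with n hn
      have hn0 : (0:ℝ) < (n:ℝ) := by exact_mod_cast hn
      field_simp
      ring
    have := hb.rpow_const (p := (k:ℝ)*((k:ℝ)+3/2)) (Or.inl one_ne_zero)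
    simpa using this
  have tall := (((t1.mul t2).mul t3).mul t4).mul t5
  unfold pphi
  exact Tendsto.congr (fun n => rfl) (by simpa using tall)

private lemma monster (k n : ℕ) (hn : 1 ≤ n) :
    ((n ! : ℝ) * k ! / ((n+k)! : ℕ)) * (∏ m ∈ Icc 1 (2*k), (m ! : ℝ)/((n+m)! : ℕ))
      * (∏ i ∈ Icc 1 k, (((2*(n+i))! : ℕ) : ℝ)/(((2*i)! : ℕ) : ℝ))
    = pphi k n * gg k n := by
  have hn0 : (0:ℝ) < (n:ℝ) := by exact_mod_cast hn
  have hT1 : ((n ! : ℝ) * k ! / ((n+k)! : ℕ))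
      = ((n:ℝ)^k * n ! / ((n+k)! : ℕ)) * ((k ! : ℝ)/(n:ℝ)^k) := by
    have h1 := factpos (n+k)
    have h2 : (0:ℝ) < (n:ℝ)^k := pow_pos hn0 k
    field_simp
  have hT2 : (∏ m ∈ Icc 1 (2*k), (m ! : ℝ)/((n+m)! : ℕ))
      = (∏ m ∈ Icc 1 (2*k), ((n:ℝ)^m * n ! / ((n+m)! : ℕ)))
        * ((∏ m ∈ Icc 1 (2*k), (m ! : ℝ)) / ((n ! : ℝ)^(2*k) * (n:ℝ)^(k*(2*k+1)))) := by
    have h1 : ∀ m ∈ Icc 1 (2*k), (m ! : ℝ)/((n+m)! : ℕ)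
        = ((n:ℝ)^m * n ! / ((n+m)! : ℕ)) * ((m ! : ℝ)/((n ! : ℝ) * (n:ℝ)^m)) := by
      intro m _
      have h2 := factpos (n+m)
      have h3 := factpos n
      have h4 : (0:ℝ) < (n:ℝ)^m := pow_pos hn0 m
      field_simp
    rw [Finset.prod_congr rfl h1, Finset.prod_mul_distrib]
    congr 1
    rw [Finset.prod_div_distrib]
    congr 1
    rw [Finset.prod_mul_distrib, Finset.prod_const, Nat.card_Icc,
      show 2*k+1-1 = 2*k by omega, Finset.prod_pow_eq_pow_sum,
      show ∑ m ∈ Icc 1 (2*k), m = k*(2*k+1) by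
        apply Nat.eq_of_mul_eq_mul_left (show 0 < 2 by norm_num)
        rw [sum2 (2*k)]; ring]
  have hT3 : (∏ i ∈ Icc 1 k, (((2*(n+i))! : ℕ) : ℝ)/(((2*i)! : ℕ) : ℝ))
      = (∏ i ∈ Icc 1 k, (((2*(n+i))! : ℕ) : ℝ) / ((((2*n)! : ℕ):ℝ) * (2*(n:ℝ))^(2*i)))
        * ((((2*n)! : ℕ):ℝ)^k * (2*(n:ℝ))^(k*(k+1)) / (∏ i ∈ Icc 1 k, (((2*i)! : ℕ):ℝ))) := by
    have h1 : ∀ i ∈ Icc 1 k, (((2*(n+i))! : ℕ) : ℝ)/(((2*i)! : ℕ) : ℝ)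
        = ((((2*(n+i))! : ℕ) : ℝ) / ((((2*n)! : ℕ):ℝ) * (2*(n:ℝ))^(2*i)))
          * ((((2*n)! : ℕ):ℝ) * (2*(n:ℝ))^(2*i) / (((2*i)! : ℕ):ℝ)) := by
      intro i _
      have h2 := factpos (2*n)
      have h3 := factpos (2*i)
      have h4 : (0:ℝ) < (2*(n:ℝ))^(2*i) := pow_pos (by positivity) _
      field_simp
    rw [Finset.prod_congr rfl h1, Finset.prod_mul_distrib]
    congr 1
    rw [Finset.prod_div_distrib]
    congr 1
    rw [Finset.prod_mul_distrib, Finset.prod_const, Nat.card_Icc,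
      show k+1-1 = k by omega, Finset.prod_pow_eq_pow_sum,
      show ∑ i ∈ Icc 1 k, 2*i = k*(k+1) by
        rw [← Finset.mul_sum]; exact sum2 k]
  have hsπn : (0:ℝ) < Real.pi * n := by positivity
  have hcb : (((2*n)! : ℕ):ℝ)^k
      = (((2*n)! : ℝ) * Real.sqrt (Real.pi * n) / ((n ! :ℝ)^2 * 4^n))^k
        * ((4:ℝ)^n * (n ! :ℝ)^2 / Real.sqrt (Real.pi * n))^k := by
    rw [← mul_pow]
    congr 1
    have h2 := factpos n
    have h3 : (0:ℝ) < Real.sqrt (Real.pi * n) := Real.sqrt_pos.mpr hsπn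
    field_simp
  have c1 : (2:ℝ)^(2*(k:ℝ)*((n:ℝ)+k+1) - (k:ℝ)*((k:ℝ)+2)) = ((4:ℝ)^n)^k * 2^(k^2) := by
    have h4 : ((4:ℝ)^n)^k = 2^(2*k*n) := by
      rw [show (4:ℝ) = 2^2 by norm_num, ← pow_mul, ← pow_mul]
      congr 1
      ring
    rw [show (2*(k:ℝ)*((n:ℝ)+k+1) - (k:ℝ)*((k:ℝ)+2)) = ((2*k*n + k^2 : ℕ):ℝ) by
        push_cast; ring,
      Real.rpow_natCast, pow_add, h4]
  have c2 : Real.pi^((k:ℝ)/2) = (Real.sqrt Real.pi)^k := by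
    rw [show ((k:ℝ)/2) = (1/2 : ℝ) * k by ring, Real.rpow_mul Real.pi_pos.le,
      Real.rpow_natCast, ← Real.sqrt_eq_rpow]
  have hnc : ((n:ℝ)) ^ ((k:ℝ)*((k:ℝ)+3/2)) = (Real.sqrt (n:ℝ))^(k*(2*k+3)) := by
    rw [show ((k:ℝ)*((k:ℝ)+3/2)) = (1/2 : ℝ) * ((k*(2*k+3) : ℕ):ℝ) by push_cast; ring,
      Real.rpow_mul (Nat.cast_nonneg n), Real.rpow_natCast, ← Real.sqrt_eq_rpow]
  have c3a : ((((n:ℝ)+k+1)/n) ^ ((k:ℝ)*((k:ℝ)+3/2)))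
      = (((n:ℝ)+k+1) ^ ((k:ℝ)*((k:ℝ)+3/2))) / (Real.sqrt (n:ℝ))^(k*(2*k+3)) := by
    rw [Real.div_rpow (by positivity) hn0.le, hnc]
  have c3b : ((n:ℝ)+k+1) ^ (-((k:ℝ)*((k:ℝ)+3/2)))
      = (((n:ℝ)+k+1) ^ ((k:ℝ)*((k:ℝ)+3/2)))⁻¹ := Real.rpow_neg (by positivity) _
  have c4 : Real.sqrt (Real.pi * n) = Real.sqrt Real.pi * Real.sqrt n :=
    Real.sqrt_mul Real.pi_pos.le _
  rw [hT1, hT2, hT3, hcb]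
  unfold pphi gg
  rw [c1, c2, c3a, c3b, c4]
  set s := Real.sqrt (n:ℝ) with hs
  set p := Real.sqrt Real.pi with hp
  have hs0 : (0:ℝ) < s := Real.sqrt_pos.mpr hn0
  have hp0 : (0:ℝ) < p := Real.sqrt_pos.mpr Real.pi_pos
  have hs2 : (n:ℝ) = s^2 := (Real.sq_sqrt hn0.le).symm
  rw [hs2]
  have hA0 : (0:ℝ) < ∏ i ∈ Icc 1 k, (((2*i)! : ℕ):ℝ) := Finset.prod_pos fun i _ => factpos _
  have hQ : (∏ m ∈ Icc 1 (2*k), (m ! : ℝ))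
      = (∏ i ∈ Icc 1 k, (((2*i)! : ℕ):ℝ))^2 / ((k ! : ℝ) * 2^k) := by
    rw [eq_div_iff (by positivity)]
    linear_combination factidR k
  rw [hQ]
  have ht0 : (0:ℝ) < ((s^2:ℝ)+k+1) ^ ((k:ℝ)*((k:ℝ)+3/2)) :=
    Real.rpow_pos_of_pos (by positivity) _
  have hfn := factpos n
  have hfnk := factpos (n+k)
  have hf2n := factpos (2*n)
  have hk := factpos k
  field_simp
  have e1 : s^(k*5) * s⁻¹^k = s^(k*4) := by
    rw [inv_pow, show k*5 = k*4 + k by ring, pow_add]; field_simp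
  have e2 : p^k * p⁻¹^k = 1 := by rw [← mul_pow, mul_inv_cancel₀ hp0.ne', one_pow]
  linear_combination ((n ! : ℝ)^(k*2) * s^(k^2*4) * 2^k * 2^(k^2) * 4^(n*k)) *
    (p^k * p⁻¹^k * e1 + s^(k*4) * e2)

private lemma gammaprod (k : ℕ) :
    (∏ i ∈ Finset.Icc 1 k, Real.Gamma (2 * (i : ℝ) + 1)) = ∏ i ∈ Icc 1 k, (((2*i)! : ℕ):ℝ) := by
  refine Finset.prod_congr rfl fun i _ => ?_
  rw [show 2*(i:ℝ)+1 = ((2*i : ℕ):ℝ)+1 by push_cast; ring, Real.Gamma_nat_eq_factorial]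

/-- For fixed `k ≥ 0`, as `x → ∞`,
`P₃ = ∏_{i=1}^{x-k-1} ∏_{j=2}^{i} (2k+i+j-1)/(i+j-1)
    ∼ Γ(3)Γ(5)⋯Γ(2k+1) · 2^{2kx-k(k+2)} · π^{-k/2} · x^{-k(k+3/2)}`. -/
theorem P3_asymptotics (k : ℕ) :
    (fun x : ℕ => ∏ i ∈ Finset.Icc 1 (x - k - 1), ∏ j ∈ Finset.Icc 2 i,
        (2 * (k : ℝ) + i + j - 1) / ((i : ℝ) + j - 1)) ~[atTop]
    (fun x : ℕ =>
      (∏ i ∈ Finset.Icc 1 k, Real.Gamma (2 * (i : ℝ) + 1)) *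
        (2 : ℝ) ^ (2 * (k : ℝ) * x - (k : ℝ) * (k + 2)) / Real.pi ^ ((k : ℝ) / 2) *
        (x : ℝ) ^ (-((k : ℝ) * ((k : ℝ) + 3 / 2)))) := by
  rw [isEquivalent_iff_exists_eq_mul]
  refine ⟨fun x => pphi k (x - k - 1), ?_, ?_⟩
  · have h := (pphi_tendsto k).comp (tendsto_sub_atTop_nat (k+1))
    refine h.congr fun x => ?_
    simp [Function.comp, Nat.sub_sub]
  · filter_upwards [eventually_ge_atTop (k+2)] with x hx
    simp only [Pi.mul_apply]
    set n := x - k - 1 with hn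
    have hn1 : 1 ≤ n := by omega
    have hL : (∏ i ∈ Icc 1 n, ∏ j ∈ Icc 2 i, (2*(k:ℝ)+i+j-1)/((i:ℝ)+j-1))
        = pphi k n * gg k n := by
      rw [Finset.prod_congr rfl (fun i hi => inner_eq k i
          (Finset.mem_Icc.mp hi).1), outer_eq, swap_eq, monster k n hn1]
    rw [hL]
    congr 1
    have hx' : n + (k+1) = x := by omega
    have hnx : ((n:ℕ):ℝ) + k + 1 = (x:ℝ) := by
      have h' : ((n + (k+1) : ℕ) : ℝ) = (x:ℝ) := by exact_mod_cast congrArg (Nat.cast : ℕ → ℝ) hx'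
      push_cast at h'
      linarith
    unfold gg
    rw [hnx, gammaprod]
end
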